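/- arXiv:1406.1714 — 13 statements merged into one kernel-verified Lean document; each statement's English description precedes it below -/
import Mathlib

section
/- Let V be a finite-dimensional vector space over a finite field K, and let U_1, ..., U_m be proper subspaces of V with V nonzero. If V equals the union of U_1, ..., U_m, then m > |K|. -/
/-!
Pass to an irredundant subcover and pick one of its members `p j`, a vector `x ∈ p j` lying in
no other member, and `y ∉ p j`. The `|K|` vectors `y + t • x` avoid `p j`, and no other member
contains two of them, since it would then contain `x`. So the other members number at least `|K|`.
-/

open Set

namespace Submodule

variable {ι K M : Type*} [Field K] [AddCommGroup M] [Module K M]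

theorem card_le_card_erase_of_biUnion_eq_univ [Fintype K] [DecidableEq ι] {s : Finset ι}
    {p : ι → Submodule K M} (hcover : ⋃ i ∈ s, (p i : Set M) = univ) {j : ι}
    (hj : p j ≠ ⊤) {x : M} (hxj : x ∈ p j) (hx : ∀ i ∈ s.erase j, x ∉ p i) :
    Fintype.card K ≤ (s.erase j).card := by
  obtain ⟨y, hyj⟩ : ∃ y, y ∉ p j := by simpa [eq_top_iff'] using hj
  have hline : ∀ t : K, ∃ i ∈ s.erase j, y + t • x ∈ p i := by
    intro t
    obtain ⟨i, hi, hyx⟩ := mem_iUnion₂.mp (hcover ▸ mem_univ (y + t • x))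
    refine ⟨i, Finset.mem_erase.mpr ⟨?_, hi⟩, hyx⟩
    rintro rfl
    exact hyj ((p i).add_mem_iff_left ((p i).smul_mem t hxj) |>.mp hyx)
  choose f hfs hf using hline
  refine Finset.card_le_card_of_injOn f (fun t _ => hfs t) fun t _ t' _ htt' => ?_
  by_contra hne
  have hsub : (t - t') • x ∈ p (f t) := by
    convert sub_mem (hf t) (htt' ▸ hf t') using 1
    module
  exact hx _ (hfs t) ((p (f t)).smul_mem_iff (sub_ne_zero.mpr hne) |>.mp hsub)

theorem card_lt_card_of_iUnion_eq_univ [Fintype K] [Fintype ι] {p : ι → Submodule K M}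
    (hp : ∀ i, p i ≠ ⊤) (hcover : ⋃ i, (p i : Set M) = univ) :
    Fintype.card K < Fintype.card ι := by
  classical
  obtain ⟨s, -, hs, hmin⟩ := exists_minimal_le_of_wellFoundedLT
    (fun s : Finset ι => ⋃ i ∈ s, (p i : Set M) = univ) Finset.univ (by simpa using hcover)
  obtain ⟨j, hj⟩ : s.Nonempty := by
    rw [Finset.nonempty_iff_ne_empty]
    rintro rfl
    simpa using hs.symm
  obtain ⟨x, hx⟩ : ∃ x, x ∉ ⋃ i ∈ s.erase j, (p i : Set M) := by
    by_contra! hcover'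
    exact (Finset.erase_ssubset hj).not_ge
      (hmin (eq_univ_of_forall hcover') (Finset.erase_subset j s))
  have hxj : x ∈ p j := by
    obtain ⟨i, hi, hxi⟩ := mem_iUnion₂.mp (hs ▸ mem_univ x)
    by_contra hxj
    exact hx <| mem_iUnion₂.mpr
      ⟨i, Finset.mem_erase.mpr ⟨fun h => hxj (h ▸ hxi), hi⟩, hxi⟩
  calc Fintype.card K ≤ (s.erase j).card :=
        card_le_card_erase_of_biUnion_eq_univ hs (hp j) hxj fun i hi hxi =>
          hx (mem_iUnion₂.mpr ⟨i, hi, hxi⟩)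
    _ < s.card := Finset.card_erase_lt_of_mem hj
    _ ≤ Fintype.card ι := Finset.card_le_univ s

end Submodule

theorem stmt_0_general (K V : Type*) [Field K] [Fintype K]
    [AddCommGroup V] [Module K V]
    (m : ℕ) (U : Fin m → Submodule K V)
    (hU : ∀ i, U i ≠ ⊤)
    (hcover : (⋃ i, (U i : Set V)) = Set.univ) :
    m > Fintype.card K := by
  simpa using Submodule.card_lt_card_of_iUnion_eq_univ hU hcover

theorem stmt_0 (K V : Type*) [Field K] [Fintype K]
    [AddCommGroup V] [Module K V] [FiniteDimensional K V] [Nontrivial V]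
    (m : ℕ) (U : Fin m → Submodule K V)
    (hU : ∀ i, U i ≠ ⊤)
    (hcover : (⋃ i, (U i : Set V)) = Set.univ) :
    m > Fintype.card K :=
  stmt_0_general K V m U hU hcover
end

section
/- Let U_1, ..., U_r and V_1, ..., V_s be vector subspaces of a finite-dimensional space over a finite field K, with the U_i pairwise distinct, the V_j pairwise distinct, and no U_i equal to any V_j. If there exist positive reals a_1,...,a_r and b_1,...,b_s such that the functions ∑ a_i·1_{U_i} and ∑ b_j·1_{V_j} are equal pointwise, then max(r, s) > |K|. -/
/-!
Take a subspace `M` that is maximal among all the `U i` and `V j`, say `M = U i`. By maximality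
and disjointness of the two families, `M` lies in no `V j`, so the `V j ⊓ M` are proper subspaces
of `M`. If `s ≤ |K|`, B. H. Neumann's lemma (the indices of a finite cover by cosets have
`∑ 1 / index ≥ 1`, with equality only for disjoint covers) shows that they cannot cover `M`,
because each has index at least `|K|` and all of them contain `0`. At a point `w ∈ M` outside every
`V j` the left-hand sum is at least `a i > 0` while the right-hand one vanishes.
-/

open Finset Pointwise

namespace Submodule

variable {K E : Type*} [Field K] [Fintype K] [AddCommGroup E] [Module K E] [Finite E]

theorem card_le_index_of_ne_top {p : Submodule K E} (hp : p ≠ ⊤) :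
    Fintype.card K ≤ p.toAddSubgroup.index := by
  have : Nontrivial (E ⧸ p) := Quotient.nontrivial_iff.mpr hp
  have : Finite (E ⧸ p) := Finite.of_surjective _ p.mkQ_surjective
  obtain ⟨y, hy⟩ := exists_ne (0 : E ⧸ p)
  calc Fintype.card K = Nat.card K := Nat.card_eq_fintype_card.symm
    _ ≤ Nat.card (E ⧸ p) := Nat.card_le_card_of_injective _ (smul_left_injective K hy)

theorem exists_forall_notMem_of_card_le {ι : Type*} [Fintype ι] {p : ι → Submodule K E}
    (hp : ∀ i, p i ≠ ⊤) (hι : Fintype.card ι ≤ Fintype.card K) : ∃ x, ∀ i, x ∉ p i := by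
  classical
  by_contra! hcover
  have hcosets : ⋃ i ∈ (univ : Finset ι), (0 : E) +ᵥ ((p i).toAddSubgroup : Set E) = Set.univ := by
    simpa [Set.eq_univ_iff_forall] using hcover
  have hq : (0 : ℚ) < Fintype.card K := by exact_mod_cast Fintype.card_pos
  have hsum_ge := AddSubgroup.one_le_sum_inv_index_of_leftCoset_cover hcosets
  have hsum_le : ∑ i, ((p i).toAddSubgroup.index : ℚ)⁻¹ ≤ Fintype.card ι / Fintype.card K :=
    calc ∑ i, ((p i).toAddSubgroup.index : ℚ)⁻¹ ≤ ∑ _i : ι, (Fintype.card K : ℚ)⁻¹ :=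
          sum_le_sum fun i _ => inv_anti₀ hq (by exact_mod_cast card_le_index_of_ne_top (hp i))
      _ = Fintype.card ι / Fintype.card K := by simp [div_eq_mul_inv]
  have hcard : Fintype.card ι = Fintype.card K := by
    have := hsum_ge.trans hsum_le
    rw [one_le_div hq] at this
    exact le_antisymm hι (by exact_mod_cast this)
  obtain ⟨i, j, hij⟩ := Fintype.exists_pair_of_one_lt_card
    (hcard ▸ Fintype.one_lt_card (α := K))
  have hdisj := AddSubgroup.pairwiseDisjoint_leftCoset_cover_of_sum_neg_index_eq_zero hcosets
    (le_antisymm (hsum_le.trans (by rw [hcard, div_self hq.ne'])) hsum_ge)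
  have hfi : ∀ k, k ∈ ({k ∈ univ | (p k).toAddSubgroup.FiniteIndex} : Finset ι) := fun k =>
    mem_filter.mpr ⟨mem_univ k, AddSubgroup.finiteIndex_of_finite⟩
  exact Set.disjoint_left.mp (hdisj (hfi i) (hfi j) hij)
    (show (0 : E) ∈ (0 : E) +ᵥ ((p i).toAddSubgroup : Set E) by simp) (by simp)

theorem exists_mem_forall_notMem_of_card_le {ι : Type*} [Fintype ι] {p : ι → Submodule K E}
    {M : Submodule K E} (hM : ∀ i, ¬ M ≤ p i) (hι : Fintype.card ι ≤ Fintype.card K) :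
    ∃ x ∈ M, ∀ i, x ∉ p i := by
  obtain ⟨x, hx⟩ := exists_forall_notMem_of_card_le (p := fun i => (p i).comap M.subtype)
    (fun i => by simpa [comap_subtype_eq_top] using hM i) hι
  exact ⟨x, x.2, hx⟩

end Submodule

theorem exists_le_of_sum_indicator_eq {K W ι κ : Type*} [Field K] [Fintype K] [AddCommGroup W]
    [Module K W] [Finite W] [Fintype ι] [Fintype κ] (hκ : Fintype.card κ ≤ Fintype.card K)
    {U : ι → Submodule K W} {V : κ → Submodule K W} {a : ι → ℝ} {b : κ → ℝ}
    (ha : ∀ i, 0 < a i)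
    (heq : ∀ w : W,
      ∑ i, Set.indicator (U i : Set W) (fun _ => a i) w =
      ∑ j, Set.indicator (V j : Set W) (fun _ => b j) w)
    (i : ι) : ∃ j, U i ≤ V j := by
  by_contra! hU
  obtain ⟨w, hwU, hwV⟩ := Submodule.exists_mem_forall_notMem_of_card_le hU hκ
  have hlhs : a i ≤ ∑ i', Set.indicator (U i' : Set W) (fun _ => a i') w := by
    calc a i = Set.indicator (U i : Set W) (fun _ => a i) w := (Set.indicator_of_mem hwU (fun _ => a i)).symm
      _ ≤ _ := single_le_sum (f := fun i' => Set.indicator (U i' : Set W) (fun _ => a i') w)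
          (fun i' _ => Set.indicator_nonneg (fun _ _ => (ha i').le) w) (mem_univ i)
  have hrhs : ∑ j, Set.indicator (V j : Set W) (fun _ => b j) w = 0 :=
    sum_eq_zero fun j _ => Set.indicator_of_notMem (hwV j) _
  linarith [ha i, heq w]

theorem stmt_1_general (K W : Type*) [Field K] [Fintype K]
    [AddCommGroup W] [Module K W] [FiniteDimensional K W]
    (r s : ℕ) (hs : 1 ≤ s)
    (U : Fin r → Submodule K W) (V : Fin s → Submodule K W)
    (hdisj : ∀ i j, U i ≠ V j)
    (a : Fin r → ℝ) (b : Fin s → ℝ)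
    (ha : ∀ i, 0 < a i) (hb : ∀ j, 0 < b j)
    (heq : ∀ w : W,
      ∑ i, Set.indicator (U i : Set W) (fun _ => a i) w =
      ∑ j, Set.indicator (V j : Set W) (fun _ => b j) w) :
    max r s > Fintype.card K := by
  by_contra! hle
  have : Finite W := Module.finite_of_finite K
  obtain ⟨M, hM, hmax⟩ := ((Set.finite_range U).union (Set.finite_range V)).exists_maximal
    ⟨V ⟨0, hs⟩, Or.inr ⟨_, rfl⟩⟩
  rcases hM with ⟨i, rfl⟩ | ⟨j, rfl⟩
  · obtain ⟨j, hij⟩ := exists_le_of_sum_indicator_eq (by simpa using le_of_max_le_right hle)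
      ha heq i
    exact hdisj i j (le_antisymm hij (hmax (Or.inr ⟨j, rfl⟩) hij))
  · obtain ⟨i, hji⟩ := exists_le_of_sum_indicator_eq (by simpa using le_of_max_le_left hle)
      hb (fun w => (heq w).symm) j
    exact hdisj i j (le_antisymm (hmax (Or.inl ⟨i, rfl⟩) hji) hji)

theorem stmt_1 (K W : Type*) [Field K] [Fintype K]
    [AddCommGroup W] [Module K W] [FiniteDimensional K W]
    (r s : ℕ) (hr : 1 ≤ r) (hs : 1 ≤ s)
    (U : Fin r → Submodule K W) (V : Fin s → Submodule K W)
    (hUinj : Function.Injective U) (hVinj : Function.Injective V)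
    (hdisj : ∀ i j, U i ≠ V j)
    (a : Fin r → ℝ) (b : Fin s → ℝ)
    (ha : ∀ i, 0 < a i) (hb : ∀ j, 0 < b j)
    (heq : ∀ w : W,
      ∑ i, Set.indicator (U i : Set W) (fun _ => a i) w =
      ∑ j, Set.indicator (V j : Set W) (fun _ => b j) w) :
    max r s > Fintype.card K :=
  stmt_1_general K W r s hs U V hdisj a b ha hb heq
end

section
/- Let V be a vector space of dimension k ≥ 2 over a finite field K with |K| = q, and let U_1, ..., U_{q+1} be proper subspaces of V whose union is V. Then there exists a subspace S of V of dimension k−2 such that {U_1, ..., U_{q+1}} is exactly the set of all (k−1)-dimensional subspaces of V containing S. -/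
/-!
Each `U i` has a point `v` lying in no other `U c`, since `q` proper subspaces never cover a
vector space over a field with `q` elements. For `x ∉ U m`, the `q` points `x + t • v` of the
affine line through `x` in the direction of the special point `v` of `U m` lie in pairwise
distinct `U c` with `c ≠ m`, so every such `U c` meets the line exactly once. Hence
`V = U m ∪ (U i ⊔ K ∙ v)`, which makes every `U i` a hyperplane, and a point lying in two of the
`U c` lies in all of them. So all the `U i` contain the codimension-two space `S = U a ⊓ U b`,
and a hyperplane through `S` meets `V ∖ S` inside some `U i`, which forces it to be that `U i`.
-/

open Module

namespace Submodule

variable {K V : Type*} [Field K] [AddCommGroup V] [Module K V]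

theorem mem_of_add_smul_mem_of_add_smul_mem {W : Submodule K V} {x v : V} {t t' : K}
    (h : x + t • v ∈ W) (h' : x + t' • v ∈ W) (htt' : t ≠ t') : v ∈ W := by
  have hdiff : (t - t') • v ∈ W := by
    rw [show (t - t') • v = (x + t • v) - (x + t' • v) by rw [sub_smul]; abel]
    exact W.sub_mem h h'
  exact (W.smul_mem_iff (sub_ne_zero.mpr htt')).mp hdiff

theorem exists_forall_notMem_of_card_le_s2 [Fintype K] (s : Finset (Submodule K V))
    (hs : s.card ≤ Fintype.card K) (hne : ∀ W ∈ s, W ≠ ⊤) : ∃ x : V, ∀ W ∈ s, x ∉ W := by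
  classical
  induction s using Finset.induction_on with
  | empty => exact ⟨0, by simp⟩
  | insert W₀ s hW₀ ih =>
    rw [Finset.card_insert_of_notMem hW₀] at hs
    obtain ⟨v, hv⟩ := ih (by omega) fun W hW => hne W (Finset.mem_insert_of_mem hW)
    by_cases hvW₀ : v ∈ W₀
    swap
    · exact ⟨v, by simpa [hvW₀] using hv⟩
    obtain ⟨y, hy⟩ : ∃ y, y ∉ W₀ := by
      by_contra! h
      exact hne W₀ (Finset.mem_insert_self _ _) (eq_top_iff'.mpr h)
    by_contra! hcov
    choose f hfs hf using fun t : K => hcov (y + t • v)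
    have hmaps : ∀ t, f t ∈ s := fun t => by
      refine (Finset.mem_insert.mp (hfs t)).resolve_left fun h => hy ?_
      exact ((W₀.add_mem_iff_left (W₀.smul_mem t hvW₀)).mp (h ▸ hf t))
    have hinj : Function.Injective f := fun t t' htt' => by
      by_contra hne'
      exact hv _ (hmaps t') (mem_of_add_smul_mem_of_add_smul_mem (htt' ▸ hf t) (hf t') hne')
    have := Finset.card_le_card_of_injOn (s := Finset.univ) f (fun t _ => hmaps t) hinj.injOn
    simp only [Finset.card_univ] at this
    omega

theorem finrank_inf_add_two_of_ne [FiniteDimensional K V] {W₁ W₂ : Submodule K V}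
    (h₁ : finrank K W₁ + 1 = finrank K V) (h₂ : finrank K W₂ + 1 = finrank K V)
    (hne : W₁ ≠ W₂) : finrank K ↥(W₁ ⊓ W₂) + 2 = finrank K V := by
  have hlt : W₁ < W₁ ⊔ W₂ := by
    refine lt_of_le_of_ne le_sup_left fun h => hne ?_
    exact eq_of_le_of_finrank_le (h ▸ le_sup_right) (by omega) |>.symm
  have hsup := finrank_lt_finrank_of_lt hlt
  have hle := (W₁ ⊔ W₂).finrank_le
  have := finrank_sup_add_finrank_inf_eq W₁ W₂
  omega

end Submodule

open Submodule

section Cover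

variable {K V ι : Type*} [Field K] [Fintype K] [AddCommGroup V] [Module K V] [Fintype ι]
  {U : ι → Submodule K V}

theorem exists_mem_iff_eq_of_cover (hι : Fintype.card ι ≤ Fintype.card K + 1)
    (hU : ∀ i, U i ≠ ⊤) (hcov : ∀ x, ∃ i, x ∈ U i) (m : ι) : ∃ v, ∀ c, v ∈ U c ↔ c = m := by
  classical
  obtain ⟨v, hv⟩ := exists_forall_notMem_of_card_le_s2 ((Finset.univ.erase m).image U)
    (Finset.card_image_le.trans <| by
      rw [Finset.card_erase_of_mem (Finset.mem_univ m), Finset.card_univ]; omega)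
    (by simpa using fun c _ => hU c)
  have hv' : ∀ c, c ≠ m → v ∉ U c := fun c hc => hv _ (by simpa using ⟨c, hc, rfl⟩)
  obtain ⟨i, hi⟩ := hcov v
  obtain rfl : i = m := by_contra fun h => hv' i h hi
  exact ⟨v, fun c => ⟨fun hc => by_contra fun h => hv' c h hc, fun h => h ▸ hi⟩⟩

theorem exists_bijective_of_cover (hι : Fintype.card ι = Fintype.card K + 1)
    (hcov : ∀ x, ∃ i, x ∈ U i) {m : ι} {v x : V} (hv : ∀ c, v ∈ U c ↔ c = m) (hx : x ∉ U m) :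
    ∃ f : K → {c // c ≠ m}, Function.Bijective f ∧ ∀ t, x + t • v ∈ U (f t) := by
  classical
  choose f hf using fun t : K => hcov (x + t • v)
  have hfm : ∀ t, f t ≠ m := fun t h =>
    hx ((U m).add_mem_iff_left ((U m).smul_mem t ((hv m).mpr rfl)) |>.mp (h ▸ hf t))
  refine ⟨fun t => ⟨f t, hfm t⟩, ?_, hf⟩
  have hinj : Function.Injective fun t => (⟨f t, hfm t⟩ : {c // c ≠ m}) := fun t t' htt' => by
    by_contra hne
    have hft : f t = f t' := congrArg Subtype.val htt'
    exact hfm t' ((hv _).mp (mem_of_add_smul_mem_of_add_smul_mem (hft ▸ hf t) (hf t') hne))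
  refine (Fintype.bijective_iff_injective_and_card _).mpr ⟨hinj, ?_⟩
  simp [Fintype.card_subtype_compl, hι]

theorem eq_of_mem_of_mem_of_notMem (hι : Fintype.card ι = Fintype.card K + 1)
    (hU : ∀ i, U i ≠ ⊤) (hcov : ∀ x, ∃ i, x ∈ U i) {x : V} {a b m : ι}
    (ha : x ∈ U a) (hb : x ∈ U b) (hm : x ∉ U m) : a = b := by
  obtain ⟨v, hv⟩ := exists_mem_iff_eq_of_cover hι.le hU hcov m
  obtain ⟨f, hf, hfx⟩ := exists_bijective_of_cover hι hcov hv hm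
  -- a `U c` containing `x` meets the line `x + K • v` only in `x`
  have hzero : ∀ c, x ∈ U c → c = f 0 := fun c hc => by
    have hcm : c ≠ m := fun h => hm (h ▸ hc)
    obtain ⟨t, ht⟩ := hf.2 ⟨c, hcm⟩
    obtain rfl : t = 0 := by
      by_contra h0
      have hvc : v ∈ U c := mem_of_add_smul_mem_of_add_smul_mem (ht ▸ hfx t) (by simpa) h0
      exact hcm ((hv c).mp hvc)
    exact congrArg Subtype.val ht.symm
  rw [hzero a ha, hzero b hb]

theorem finrank_add_one_of_cover [FiniteDimensional K V]
    (hι : Fintype.card ι = Fintype.card K + 1) (hU : ∀ i, U i ≠ ⊤)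
    (hcov : ∀ x, ∃ i, x ∈ U i) (i : ι) : finrank K (U i) + 1 = finrank K V := by
  classical
  have hq := Fintype.one_lt_card (α := K)
  obtain ⟨m, hmi⟩ := Fintype.exists_ne_of_one_lt_card (by omega) i
  obtain ⟨v, hv⟩ := exists_mem_iff_eq_of_cover hι.le hU hcov m
  have htop : U i ⊔ K ∙ v = ⊤ := by
    by_contra hne
    obtain ⟨x, hx⟩ := exists_forall_notMem_of_card_le_s2 {U m, U i ⊔ K ∙ v}
      (Finset.card_le_two.trans hq) (by simpa using ⟨hU m, hne⟩)
    obtain ⟨f, hf, hfx⟩ := exists_bijective_of_cover hι hcov hv (hx _ (by simp))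
    obtain ⟨t, ht⟩ := hf.2 ⟨i, hmi.symm⟩
    refine hx (U i ⊔ K ∙ v) (by simp) ?_
    have hxt : x + t • v ∈ U i ⊔ K ∙ v := mem_sup_left (by simpa [ht] using hfx t)
    have htv : t • v ∈ U i ⊔ K ∙ v := mem_sup_right (smul_mem _ t (mem_span_singleton_self v))
    rwa [(U i ⊔ K ∙ v).add_mem_iff_left htv] at hxt
  have hle := finrank_add_le_finrank_add_finrank (U i) (K ∙ v)
  rw [htop, finrank_top] at hle
  have hv1 : finrank K (K ∙ v) ≤ 1 := by simpa using finrank_span_le_card ({v} : Set V)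
  have := finrank_lt (hU i)
  omega

end Cover

theorem exists_eq_of_le_of_cover {K V ι : Type*} [Field K] [AddCommGroup V] [Module K V]
    [FiniteDimensional K V] {U : ι → Submodule K V} (hcov : ∀ x, ∃ i, x ∈ U i)
    (hU : ∀ i, finrank K (U i) + 1 = finrank K V) {S W : Submodule K V} (hSU : ∀ i, S ≤ U i)
    (hS : finrank K S + 2 = finrank K V) (hSW : S ≤ W) (hW : finrank K W + 1 = finrank K V) :
    ∃ i, U i = W := by
  obtain ⟨x, hxW, hxS⟩ := SetLike.exists_of_lt (lt_of_le_of_ne hSW (by rintro rfl; omega))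
  obtain ⟨i, hxi⟩ := hcov x
  refine ⟨i, by_contra fun hne => hxS ?_⟩
  have := finrank_inf_add_two_of_ne hW (hU i) (Ne.symm hne)
  rw [eq_of_le_of_finrank_le (le_inf hSW (hSU i)) (by omega)]
  exact ⟨hxW, hxi⟩

theorem stmt_2_general (K V : Type*) [Field K] [Fintype K]
    [AddCommGroup V] [Module K V] [FiniteDimensional K V]
    (k : ℕ) (hdim : Module.finrank K V = k)
    (U : Fin (Fintype.card K + 1) → Submodule K V)
    (hU : ∀ i, U i ≠ ⊤)
    (hcover : (⋃ i, (U i : Set V)) = Set.univ) :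
    ∃ S : Submodule K V, Module.finrank K S = k - 2 ∧
      Set.range U = {W : Submodule K V | S ≤ W ∧ Module.finrank K W = k - 1} := by
  have hι : Fintype.card (Fin (Fintype.card K + 1)) = Fintype.card K + 1 := Fintype.card_fin _
  have hcov : ∀ x, ∃ i, x ∈ U i := fun x => by
    simpa using hcover.ge (Set.mem_univ x)
  have hhyp := finrank_add_one_of_cover hι hU hcov
  obtain ⟨a, b, hab⟩ := Fintype.exists_pair_of_one_lt_card (α := Fin (Fintype.card K + 1))
    (by have := Fintype.one_lt_card (α := K); omega)
  have hUab : U a ≠ U b := fun h => by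
    obtain ⟨v, hv⟩ := exists_mem_iff_eq_of_cover hι.le hU hcov a
    exact hab.symm ((hv b).mp (h ▸ (hv a).mpr rfl))
  have hS := finrank_inf_add_two_of_ne (hhyp a) (hhyp b) hUab
  have hSU : ∀ m, U a ⊓ U b ≤ U m := fun m x hx => by
    by_contra hm
    exact hab (eq_of_mem_of_mem_of_notMem hι hU hcov hx.1 hx.2 hm)
  refine ⟨U a ⊓ U b, by omega, Set.ext fun W => ⟨?_, fun ⟨hSW, hW⟩ => ?_⟩⟩
  · rintro ⟨i, rfl⟩
    exact ⟨hSU i, by have := hhyp i; omega⟩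
  · exact exists_eq_of_le_of_cover hcov hhyp hSU (by omega) hSW (by omega)

theorem stmt_2 (K V : Type*) [Field K] [Fintype K]
    [AddCommGroup V] [Module K V] [FiniteDimensional K V]
    (k : ℕ) (hk : 2 ≤ k) (hdim : Module.finrank K V = k)
    (U : Fin (Fintype.card K + 1) → Submodule K V)
    (hU : ∀ i, U i ≠ ⊤)
    (hcover : (⋃ i, (U i : Set V)) = Set.univ) :
    ∃ S : Submodule K V, Module.finrank K S = k - 2 ∧
      Set.range U = {W : Submodule K V | S ≤ W ∧ Module.finrank K W = k - 1} :=
  stmt_2_general K V k hdim U hU hcover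
end

section
/- Let V be a vector space of dimension k ≥ 2 over a finite field K with |K| = q, and let U_1, ..., U_{q+1} be proper subspaces covering V. Then at most one of the U_i has dimension ≤ k−2; equivalently, at least q of the U_i are hyperplanes (have dimension k−1). -/
/-! Count nonzero vectors. All `q + 1` subspaces contain `0`, so covering the `q ^ k - 1` nonzero
vectors of `V` forces `q ^ k + q ≤ ∑ i, q ^ (dim U i)`. A proper subspace has at most `q ^ (k - 1)`
elements; if two of them had at most `q ^ (k - 2)`, the sum would be at most
`2 q ^ (k - 2) + (q - 1) q ^ (k - 1) < q ^ k + q`. -/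

open Finset

theorem Finset.card_add_card_le_one_add_sum_of_forall_mem {ι α : Type*} [Fintype ι] [Fintype α]
    [DecidableEq α] (a : α) (s : ι → Finset α) (hcover : ∀ x, ∃ i, x ∈ s i)
    (ha : ∀ i, a ∈ s i) :
    Fintype.card α + Fintype.card ι ≤ 1 + ∑ i, (s i).card := by
  have herase : Fintype.card α - 1 ≤ ∑ i, ((s i).erase a).card :=
    calc Fintype.card α - 1 = (univ.erase a).card := by rw [card_erase_of_mem (mem_univ a), card_univ]
      _ ≤ (univ.biUnion fun i => (s i).erase a).card := card_le_card fun x hx => by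
          obtain ⟨i, hi⟩ := hcover x
          exact mem_biUnion.mpr ⟨i, mem_univ i, mem_erase.mpr ⟨(mem_erase.mp hx).1, hi⟩⟩
      _ ≤ ∑ i, ((s i).erase a).card := card_biUnion_le
  have hsum : ∑ i, ((s i).erase a).card + Fintype.card ι = ∑ i, (s i).card := by
    rw [card_univ.symm, card_eq_sum_ones, ← sum_add_distrib]
    exact sum_congr rfl fun i _ => by rw [card_erase_add_one (ha i)]
  have : 0 < Fintype.card α := Fintype.card_pos_iff.mpr ⟨a⟩
  omega

theorem Finset.sum_le_two_mul_add_of_le_of_le {ι : Type*} [Fintype ι] [DecidableEq ι]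
    (f : ι → ℕ) {i j : ι} (hij : i ≠ j) {b B : ℕ} (hB : ∀ t, f t ≤ B) (hi : f i ≤ b)
    (hj : f j ≤ b) :
    ∑ t, f t ≤ 2 * b + (Fintype.card ι - 2) * B := by
  have hj' : j ∈ univ.erase i := mem_erase.mpr ⟨hij.symm, mem_univ j⟩
  have hrest : ((univ.erase i).erase j).card = Fintype.card ι - 2 := by
    rw [card_erase_of_mem hj', card_erase_of_mem (mem_univ i), card_univ]
    omega
  have := add_le_add hi
    (add_le_add hj (sum_le_card_nsmul ((univ.erase i).erase j) f B fun t _ => hB t))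
  rw [add_sum_erase _ _ hj', add_sum_erase _ _ (mem_univ i), hrest, smul_eq_mul] at this
  omega

theorem two_mul_pow_sub_two_add_sub_one_mul_pow_sub_one_lt {q k : ℕ} (hq : 2 ≤ q) (hk : 2 ≤ k) :
    2 * q ^ (k - 2) + (q - 1) * q ^ (k - 1) < q ^ k + q := by
  obtain ⟨r, rfl⟩ : ∃ r, q = r + 2 := ⟨q - 2, by omega⟩
  obtain ⟨m, rfl⟩ : ∃ m, k = m + 2 := ⟨k - 2, by omega⟩
  have : 0 < (r + 2) ^ m := by positivity
  rw [show r + 2 - 1 = r + 1 by omega, show m + 2 - 1 = m + 1 by omega, Nat.add_sub_cancel]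
  simp only [pow_succ]
  nlinarith

theorem Submodule.card_pow_finrank_add_card_le_of_iUnion_eq_univ {K V ι : Type*} [Field K]
    [Fintype K] [AddCommGroup V] [Module K V] [FiniteDimensional K V] [Fintype ι]
    (U : ι → Submodule K V) (hcover : (⋃ i, (U i : Set V)) = Set.univ) :
    Fintype.card K ^ Module.finrank K V + Fintype.card ι
      ≤ 1 + ∑ i, Fintype.card K ^ Module.finrank K (U i) := by
  classical
  have : Finite V := Module.finite_of_finite K
  have : Fintype V := Fintype.ofFinite V
  have hmem (x : V) : ∃ i, x ∈ (U i : Set V).toFinset := by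
    simpa only [Set.mem_toFinset] using Set.mem_iUnion.mp (hcover.symm ▸ Set.mem_univ x)
  have hcard (i) : (U i : Set V).toFinset.card = Fintype.card K ^ Module.finrank K (U i) := by
    rw [Set.toFinset_card, ← Module.card_eq_pow_finrank]
    exact Fintype.card_congr' rfl
  have := card_add_card_le_one_add_sum_of_forall_mem (0 : V) _ hmem (fun i => by simp)
  rwa [Module.card_eq_pow_finrank (K := K), sum_congr rfl fun i _ => hcard i] at this

theorem stmt_3 (K V : Type*) [Field K] [Fintype K]
    [AddCommGroup V] [Module K V] [FiniteDimensional K V]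
    (k : ℕ) (hk : 2 ≤ k) (hdim : Module.finrank K V = k)
    (U : Fin (Fintype.card K + 1) → Submodule K V)
    (hU : ∀ i, U i ≠ ⊤)
    (hcover : (⋃ i, (U i : Set V)) = Set.univ) :
    ∀ i j, Module.finrank K (U i) ≤ k - 2 → Module.finrank K (U j) ≤ k - 2 → i = j := by
  intro i j hi hj
  by_contra hij
  classical
  have hq : 2 ≤ Fintype.card K := Fintype.one_lt_card
  have hcount := Submodule.card_pow_finrank_add_card_le_of_iUnion_eq_univ U hcover
  have hproper (t) : Module.finrank K (U t) ≤ k - 1 := by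
    have := Submodule.finrank_lt (hU t)
    omega
  have hsum := sum_le_two_mul_add_of_le_of_le (fun t => Fintype.card K ^ Module.finrank K (U t))
    hij (fun t => Nat.pow_le_pow_right (by omega) (hproper t))
    (Nat.pow_le_pow_right (by omega) hi) (Nat.pow_le_pow_right (by omega) hj)
  have hlt := two_mul_pow_sub_two_add_sub_one_mul_pow_sub_one_lt hq hk
  rw [Fintype.card_fin, show Fintype.card K + 1 - 2 = Fintype.card K - 1 by omega] at hsum
  rw [hdim, Fintype.card_fin] at hcount
  omega
end

section
/- Let K ⊆ L be finite fields with ω ∈ L \ K, let q = |K|, m = q+1, and enumerate K = {x_1, ..., x_q}. Let C_1 ⊆ L^m be the K-span of v_1 = (1,1,...,1,0) and v_2 = (x_1, x_2, ..., x_q, 1). Then every nonzero codeword of C_1 has Hamming weight exactly m−1 = q. -/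
/-!
The codeword `a • v₁ + b • v₂` is the image in `L` of the `K`-vector
`(a + b x₁, …, a + b x_q, b)`. If `b ≠ 0`, then `y ↦ a + b y` permutes `K`, so the first `q`
coordinates run over `K` and exactly one vanishes, while the last one does not. If `b = 0`, then
`a ≠ 0` and only the last coordinate vanishes. Either way exactly one of the `q + 1` coordinates is
zero.
-/

open Finset

section Hamming

variable {ι ι' β : Type*} [Fintype ι] [Fintype ι'] [Zero β] [DecidableEq β]

theorem hammingNorm_comp_equiv (e : ι' ≃ ι) (f : ι → β) :
    hammingNorm (f ∘ e) = hammingNorm f := by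
  unfold hammingNorm
  exact card_equiv e (by simp)

theorem hammingNorm_id [Fintype β] : hammingNorm (fun y : β => y) = Fintype.card β - 1 := by
  simp [hammingNorm, filter_ne', card_erase_of_mem]

theorem hammingNorm_snoc {n : ℕ} (f : Fin n → β) (y : β) :
    hammingNorm (Fin.snoc f y : Fin (n + 1) → β) = hammingNorm f + if y = 0 then 0 else 1 := by
  by_cases hy : y = 0 <;>
    simp [hammingNorm, card_filter, Fin.sum_univ_castSucc, hy]

end Hamming

theorem hammingNorm_affine_of_bijective {ι K : Type*} [Fintype ι] [DivisionRing K] [Fintype K]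
    [DecidableEq K] {x : ι → K} (hx : Function.Bijective x) (a : K) {b : K} (hb : b ≠ 0) :
    hammingNorm (fun i => a + b * x i) = Fintype.card K - 1 := by
  rw [← hammingNorm_id (β := K), ← hammingNorm_comp_equiv
    (((Equiv.ofBijective x hx).trans (Equiv.mulLeft₀ b hb)).trans (Equiv.addLeft a))]
  rfl

theorem stmt_6_general (K L : Type*) [Field K] [Fintype K] [Field L]
    [Algebra K L] [DecidableEq L]
    (x : Fin (Fintype.card K) → K) (hx : Function.Bijective x)
    (v1 v2 : Fin (Fintype.card K + 1) → L)
    (hv1 : v1 = fun i => if i.val < Fintype.card K then 1 else 0)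
    (hv2 : v2 = fun i => if h : i.val < Fintype.card K
      then algebraMap K L (x ⟨i.val, h⟩) else 1) :
    ∀ c ∈ Submodule.span K {v1, v2}, c ≠ 0 → hammingNorm c = Fintype.card K := by
  classical
  intro c hc hne
  obtain ⟨a, b, rfl⟩ := Submodule.mem_span_pair.mp hc
  have hcoord : a • v1 + b • v2 = fun i => algebraMap K L
      ((Fin.snoc (fun j => a + b * x j) b : Fin (Fintype.card K + 1) → K) i) := by
    subst hv1 hv2
    ext i
    induction i using Fin.lastCases <;> simp [Algebra.smul_def]
  rw [hcoord, hammingNorm_comp (fun _ => algebraMap K L) (fun _ => (algebraMap K L).injective)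
    (fun _ => map_zero _), hammingNorm_snoc]
  by_cases hb : b = 0
  · have ha : a ≠ 0 := by rintro rfl; simp [hb] at hne
    simp [hb, hammingNorm, ha]
  · rw [hammingNorm_affine_of_bijective hx a hb, if_neg hb]
    have := Fintype.card_pos (α := K)
    omega

theorem stmt_6 (K L : Type*) [Field K] [Fintype K] [Field L] [Fintype L]
    [Algebra K L] [DecidableEq L]
    (x : Fin (Fintype.card K) → K) (hx : Function.Bijective x)
    (v1 v2 : Fin (Fintype.card K + 1) → L)
    (hv1 : v1 = fun i => if i.val < Fintype.card K then 1 else 0)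
    (hv2 : v2 = fun i => if h : i.val < Fintype.card K
      then algebraMap K L (x ⟨i.val, h⟩) else 1) :
    ∀ c ∈ Submodule.span K {v1, v2}, c ≠ 0 → hammingNorm c = Fintype.card K :=
  stmt_6_general K L x hx v1 v2 hv1 hv2
end

section
/- Let K ⊆ L be finite fields with q = |K| and m = q+1. There exist K-linear codes C_1, C_2 ⊆ L^m and a K-linear bijective isometry f : C_1 → C_2 (preserving Hamming weight) such that f does not extend to any K-monomial map of L^m. Concretely, C_1 = span_K{(1,...,1,0), (x_1,...,x_q,1)} and C_2 = span_K{(1,...,1,0), (ω,...,ω,0)} with ω ∈ L \ K work, via f mapping the first generator to the first and the second to the second. -/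
theorem stmt_8 (K L : Type*) [Field K] [Fintype K] [Field L] [Fintype L]
    [Algebra K L] [DecidableEq L]
    (ω : L) (hω : ω ∉ Set.range (algebraMap K L))
    (x : Fin (Fintype.card K) → K) (hx : Function.Bijective x)
    (v1 v2 u1 u2 : Fin (Fintype.card K + 1) → L)
    (hv1 : v1 = fun i => if i.val < Fintype.card K then 1 else 0)
    (hv2 : v2 = fun i => if h : i.val < Fintype.card K
      then algebraMap K L (x ⟨i.val, h⟩) else 1)
    (hu1 : u1 = v1)
    (hu2 : u2 = fun i => if i.val < Fintype.card K then ω else 0) :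
    ∃ f : (Submodule.span K {v1, v2} : Submodule K (Fin (Fintype.card K + 1) → L))
        →ₗ[K] (Fin (Fintype.card K + 1) → L),
      LinearMap.range f = Submodule.span K {u1, u2} ∧
      Function.Injective f ∧
      (∀ c, hammingNorm (f c) = hammingNorm (c : Fin (Fintype.card K + 1) → L)) ∧
      f ⟨v1, Submodule.subset_span (Set.mem_insert _ _)⟩ = u1 ∧
      f ⟨v2, Submodule.subset_span (Set.mem_insert_of_mem _ rfl)⟩ = u2 ∧
      ¬ ∃ (π : Equiv.Perm (Fin (Fintype.card K + 1)))
          (g : Fin (Fintype.card K + 1) → (L ≃ₗ[K] L)),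
          ∀ (c : (Submodule.span K {v1, v2} : Submodule K (Fin (Fintype.card K + 1) → L)))
            (i : Fin (Fintype.card K + 1)),
            f c i = g i ((c : Fin (Fintype.card K + 1) → L) (π i)) := by
  classical
  have hq0 : 0 < Fintype.card K := Fintype.card_pos
  have hinj : Function.Injective (algebraMap K L) := (algebraMap K L).injective
  obtain ⟨j0, hj0⟩ := hx.surjective 0
  -- key field fact
  have hkey : ∀ a b : K, (algebraMap K L) a + (algebraMap K L) b * ω = 0 → a = 0 ∧ b = 0 := by
    intro a b h
    by_cases hb : b = 0
    · subst hb
      simp only [map_zero, zero_mul, add_zero] at h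
      exact ⟨hinj (by simpa using h), rfl⟩
    · exfalso
      apply hω
      refine ⟨-(a / b), ?_⟩
      have hbL : (algebraMap K L) b ≠ 0 := fun h' => hb (hinj (by simpa using h'))
      rw [map_neg, map_div₀]
      field_simp
      linear_combination -h
  -- the linear map on the ambient space
  set F : (Fin (Fintype.card K + 1) → L) →ₗ[K] (Fin (Fintype.card K + 1) → L) :=
    { toFun := fun c i => if i.val < Fintype.card K
        then c (Fin.castSucc j0) + ω * c (Fin.last (Fintype.card K)) else 0
      map_add' := by
        intro c d; funext i
        by_cases h : i.val < Fintype.card K <;> simp [h] <;> ring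
      map_smul' := by
        intro k c; funext i
        by_cases h : i.val < Fintype.card K <;> simp [h, smul_add, mul_smul_comm] } with hFdef
  have hFapp : ∀ (c : Fin (Fintype.card K + 1) → L) i,
      F c i = if i.val < Fintype.card K
        then c (Fin.castSucc j0) + ω * c (Fin.last (Fintype.card K)) else 0 := fun c i => rfl
  have hlastq : (Fin.last (Fintype.card K)).val = Fintype.card K := rfl
  have hFv1 : F v1 = u1 := by
    funext i
    rw [hFapp, hu1, hv1]
    by_cases h : i.val < Fintype.card K
    · simp [h, j0.isLt, hlastq]
    · simp [h]
  have hFv2 : F v2 = u2 := by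
    funext i
    rw [hFapp]
    by_cases h : i.val < Fintype.card K <;>
      simp [h, hv2, hu2, hj0, j0.isLt]
  have hFsum : ∀ a b : K, F (a • v1 + b • v2) = a • u1 + b • u2 := by
    intro a b
    rw [map_add, map_smul, map_smul, hFv1, hFv2]
  -- coordinates of combinations
  have hvc : ∀ (a b : K) (i : Fin (Fintype.card K + 1)) (h : i.val < Fintype.card K),
      (a • v1 + b • v2) i = algebraMap K L (a + b * x ⟨i.val, h⟩) := by
    intro a b i h
    simp [hv1, hv2, h, Algebra.smul_def, map_add, map_mul]
  have hvlast : ∀ a b : K, (a • v1 + b • v2) (Fin.last (Fintype.card K)) = algebraMap K L b := by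
    intro a b
    simp [hv1, hv2, Algebra.smul_def]
  have huc : ∀ (a b : K) (i : Fin (Fintype.card K + 1)) (h : i.val < Fintype.card K),
      (a • u1 + b • u2) i = algebraMap K L a + algebraMap K L b * ω := by
    intro a b i h
    simp [hu1, hu2, hv1, h, Algebra.smul_def]
  have hulast : ∀ a b : K, (a • u1 + b • u2) (Fin.last (Fintype.card K)) = 0 := by
    intro a b
    simp [hu1, hu2, hv1]
  -- counting lemma
  have hcount : ∀ (y : Fin (Fintype.card K + 1) → L) (i₀ : Fin (Fintype.card K + 1)),
      (∀ i, y i = 0 ↔ i = i₀) → hammingNorm y = Fintype.card K := by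
    intro y i₀ h
    have heq : (Finset.univ.filter fun i => y i ≠ 0) = Finset.univ.erase i₀ := by
      ext i
      simp [h i, Finset.mem_erase]
    unfold hammingNorm
    rw [heq, Finset.card_erase_of_mem (Finset.mem_univ _)]
    simp
  -- zero-coordinate characterizations
  have hu_norm : ∀ a b : K, ¬(a = 0 ∧ b = 0) →
      hammingNorm (a • u1 + b • u2) = Fintype.card K := by
    intro a b hab
    refine hcount _ (Fin.last (Fintype.card K)) fun i => ?_
    by_cases h : i.val < Fintype.card K
    · rw [huc a b i h]
      constructor
      · intro h0; exact absurd (hkey a b h0) hab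
      · intro hi
        exfalso
        rw [hi, hlastq] at h
        -- hlastq? h : i.val < card with i = last; get contradiction
        exact lt_irrefl _ h
    · have : i = Fin.last (Fintype.card K) := by
        apply Fin.ext
        have := i.isLt
        omega
      rw [this, hulast a b]
      simp
  have hv_norm : ∀ a b : K, ¬(a = 0 ∧ b = 0) →
      hammingNorm (a • v1 + b • v2) = Fintype.card K := by
    intro a b hab
    by_cases hb : b = 0
    · subst hb
      have ha : a ≠ 0 := fun h => hab ⟨h, rfl⟩
      refine hcount _ (Fin.last (Fintype.card K)) fun i => ?_
      by_cases h : i.val < Fintype.card K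
      · rw [hvc a 0 i h]
        constructor
        · intro h0
          have : a + 0 * x ⟨i.val, h⟩ = 0 := hinj (by simpa using h0)
          simp at this
          exact absurd this ha
        · intro hi
          exfalso
          rw [hi, hlastq] at h
          exact lt_irrefl _ h
      · have : i = Fin.last (Fintype.card K) := by
          apply Fin.ext; have := i.isLt; omega
        rw [this, hvlast]
        simp
    · obtain ⟨j1, hj1⟩ := hx.surjective (-a / b)
      refine hcount _ (Fin.castSucc j1) fun i => ?_
      by_cases h : i.val < Fintype.card K
      · rw [hvc a b i h]
        have hzero : algebraMap K L (a + b * x ⟨i.val, h⟩) = 0 ↔ a + b * x ⟨i.val, h⟩ = 0 := by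
          constructor
          · intro h0; exact hinj (by simpa using h0)
          · intro h0; rw [h0, map_zero]
        rw [hzero]
        have hiff : a + b * x ⟨i.val, h⟩ = 0 ↔ x ⟨i.val, h⟩ = -a / b := by
          rw [eq_div_iff hb]
          constructor
          · intro h0; linear_combination h0
          · intro h0; linear_combination h0
        rw [hiff, ← hj1, hx.injective.eq_iff]
        constructor
        · intro h0
          apply Fin.ext
          have : (⟨i.val, h⟩ : Fin (Fintype.card K)).val = j1.val := by rw [h0]
          simpa using this
        · intro h0
          apply Fin.ext
          have : i.val = j1.val := by rw [h0]; rfl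
          simpa using this
      · have hi : i = Fin.last (Fintype.card K) := by
          apply Fin.ext; have := i.isLt; omega
        rw [hi, hvlast]
        constructor
        · intro h0
          exact absurd (hinj (by simpa using h0)) hb
        · intro h0
          exfalso
          have : (Fintype.card K) = j1.val := by
            have := congrArg Fin.val h0
            simpa using this
          have := j1.isLt
          omega
  -- the map
  refine ⟨F ∘ₗ (Submodule.span K ({v1, v2} : Set _)).subtype, ?_, ?_, ?_, ?_, ?_, ?_⟩
  · rw [LinearMap.range_comp, Submodule.range_subtype, Submodule.map_span]
    congr 1
    rw [Set.image_insert_eq, Set.image_singleton, hFv1, hFv2]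
  · rw [← LinearMap.ker_eq_bot]
    rw [Submodule.eq_bot_iff]
    intro c hc
    rw [LinearMap.mem_ker] at hc
    obtain ⟨a, b, hab⟩ := Submodule.mem_span_pair.mp c.2
    have hc' : F (a • v1 + b • v2) = 0 := by
      rw [hab]; exact hc
    rw [hFsum] at hc'
    have h0 : (a • u1 + b • u2) (⟨0, by omega⟩ : Fin (Fintype.card K + 1)) = 0 := by
      rw [hc']; rfl
    rw [huc a b _ (by simpa using hq0)] at h0
    obtain ⟨ha, hb⟩ := hkey a b h0
    apply Subtype.ext
    rw [← hab, ha, hb]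
    simp
  · intro c
    obtain ⟨a, b, hab⟩ := Submodule.mem_span_pair.mp c.2
    have hfc : (F ∘ₗ (Submodule.span K ({v1, v2} : Set _)).subtype) c
        = a • u1 + b • u2 := by
      show F (c : Fin (Fintype.card K + 1) → L) = _
      rw [← hab, hFsum]
    rw [hfc, ← hab]
    by_cases hab0 : a = 0 ∧ b = 0
    · obtain ⟨ha, hb⟩ := hab0
      subst ha; subst hb
      simp
    · rw [hu_norm a b hab0, hv_norm a b hab0]
  · show F v1 = u1
    exact hFv1
  · show F v2 = u2
    exact hFv2
  · rintro ⟨π, g, hg⟩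
    have h2 := hg ⟨v2, Submodule.subset_span (Set.mem_insert_of_mem _ rfl)⟩
      (Fin.last (Fintype.card K))
    have h1 := hg ⟨v1, Submodule.subset_span (Set.mem_insert _ _)⟩
      (Fin.last (Fintype.card K))
    have hF2 : (F ∘ₗ (Submodule.span K ({v1, v2} : Set _)).subtype)
        ⟨v2, Submodule.subset_span (Set.mem_insert_of_mem _ rfl)⟩ (Fin.last (Fintype.card K)) = 0 := by
      show F v2 (Fin.last (Fintype.card K)) = 0
      rw [hFv2, hu2]
      simp
    have hF1 : (F ∘ₗ (Submodule.span K ({v1, v2} : Set _)).subtype)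
        ⟨v1, Submodule.subset_span (Set.mem_insert _ _)⟩ (Fin.last (Fintype.card K)) = 0 := by
      show F v1 (Fin.last (Fintype.card K)) = 0
      rw [hFv1, hu1, hv1]
      simp
    rw [hF2] at h2
    rw [hF1] at h1
    have hz2 : v2 (π (Fin.last (Fintype.card K))) = 0 :=
      (LinearEquiv.map_eq_zero_iff _).mp h2.symm
    have hπ : (π (Fin.last (Fintype.card K))).val < Fintype.card K := by
      by_contra h
      rw [hv2] at hz2
      simp only [dif_neg h] at hz2
      exact one_ne_zero hz2
    have hz1 : v1 (π (Fin.last (Fintype.card K))) = 0 :=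
      (LinearEquiv.map_eq_zero_iff _).mp h1.symm
    rw [hv1] at hz1
    simp only [if_pos hπ] at hz1
    exact one_ne_zero hz1
end

section
/- A map f : L^m → L^m is a K-linear isometry of the Hamming space (i.e., K-linear, bijective, and distance-preserving) if and only if f is K-monomial, i.e., there exist π ∈ S_m and g_1, ..., g_m ∈ Aut_K(L) with f(u)_i = g_i(u_{π(i)}) for all u ∈ L^m and all i. -/
/-!
A linear map `F` preserving Hamming weight sends each `Pi.single j a` to a vector of weight one,
and its support point `σ j` does not depend on `a`: if `a` and `b` landed on different
coordinates, `F (Pi.single j (a + b))` would have weight two. The map `σ` is injective, since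
`Pi.single j a + Pi.single j' a` has weight two, so `F` acts coordinatewise along the permutation
`σ` through the maps `a ↦ F (Pi.single j a) (σ j)`, which are bijective because `F` is.
-/

open Function

theorem hammingDist_comp_perm {ι β : Type*} [Fintype ι] [DecidableEq β] (π : Equiv.Perm ι)
    (x y : ι → β) : hammingDist (x ∘ π) (y ∘ π) = hammingDist x y :=
  Finset.card_equiv π (by simp)

theorem hammingNorm_le_one_iff {ι M : Type*} [Fintype ι] [DecidableEq M] [Zero M]
    {x : ι → M} : hammingNorm x ≤ 1 ↔ ∀ i k, x i ≠ 0 → x k ≠ 0 → i = k := by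
  simp only [hammingNorm, Finset.card_le_one, Finset.mem_filter, Finset.mem_univ, true_and]
  exact ⟨fun h i k hi hk => h i hi k hk, fun h i hi k hk => h i k hi hk⟩

theorem hammingNorm_single_le_one {ι M : Type*} [Fintype ι] [DecidableEq ι] [DecidableEq M]
    [Zero M] (j : ι) (a : M) : hammingNorm (Pi.single j a : ι → M) ≤ 1 := by
  have hsupp : ∀ i, (Pi.single j a : ι → M) i ≠ 0 → i = j := fun i hi => by
    by_contra hij
    simp [hij] at hi
  exact hammingNorm_le_one_iff.2 fun i k hi hk => (hsupp i hi).trans (hsupp k hk).symm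

section LinearIsometry

variable {ι M R : Type*} [Fintype ι] [DecidableEq ι] [AddCommMonoid M] [Semiring R] [Module R M]
  {F : (ι → M) →ₗ[R] (ι → M)}

theorem eq_of_map_single_apply_ne_zero [DecidableEq M]
    (hF : ∀ x, hammingNorm (F x) = hammingNorm x)
    {j i k : ι} {a b : M} (ha : F (Pi.single j a) i ≠ 0) (hb : F (Pi.single j b) k ≠ 0) :
    i = k := by
  have hle : ∀ c, hammingNorm (F (Pi.single j c)) ≤ 1 :=
    fun c => (hF _).trans_le (hammingNorm_single_le_one j c)
  by_contra hik
  have ha' : F (Pi.single j a) k = 0 := by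
    by_contra h
    exact hik (hammingNorm_le_one_iff.1 (hle a) i k ha h)
  have hb' : F (Pi.single j b) i = 0 := by
    by_contra h
    exact hik (hammingNorm_le_one_iff.1 (hle b) i k h hb)
  have hab : F (Pi.single j (a + b)) = F (Pi.single j a) + F (Pi.single j b) := by
    rw [Pi.single_add, map_add]
  exact hik (hammingNorm_le_one_iff.1 (hle (a + b)) i k (by simpa [hab, hb'])
    (by simpa [hab, ha']))

theorem exists_map_single_apply_eq_zero [DecidableEq M] [Nontrivial M]
    (hF : ∀ x, hammingNorm (F x) = hammingNorm x) :
    ∃ σ : ι → ι, ∀ j a k, k ≠ σ j → F (Pi.single j a) k = 0 := by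
  obtain ⟨a, ha⟩ := exists_ne (0 : M)
  have hsupp : ∀ j, ∃ i, F (Pi.single j a) i ≠ 0 := fun j => by
    refine Function.ne_iff.1 (hammingNorm_ne_zero_iff.1 ?_)
    rw [hF, hammingNorm_ne_zero_iff]
    simpa using ha
  choose σ hσ using hsupp
  refine ⟨σ, fun j b k hk => ?_⟩
  by_contra h
  exact hk (eq_of_map_single_apply_ne_zero hF h (hσ j))

theorem injective_of_map_single_apply_eq_zero [DecidableEq M] [Nontrivial M]
    (hF : ∀ x, hammingNorm (F x) = hammingNorm x) {σ : ι → ι}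
    (hσ : ∀ j a k, k ≠ σ j → F (Pi.single j a) k = 0) : Injective σ := by
  intro j j' hjj'
  obtain ⟨a, ha⟩ := exists_ne (0 : M)
  set x : ι → M := Pi.single j a + Pi.single j' a
  have hx : hammingNorm x ≤ 1 := by
    refine hF x ▸ hammingNorm_le_one_iff.2 fun i k hi hk => ?_
    have hsupp : ∀ i, F x i ≠ 0 → i = σ j := fun i hi => by
      by_contra h
      simp [x, hσ j a i h, hσ j' a i (hjj' ▸ h)] at hi
    exact (hsupp i hi).trans (hsupp k hk).symm
  by_contra hne
  exact hne (hammingNorm_le_one_iff.1 hx j j' (by simp [x, hne, ha])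
    (by simp [x, Ne.symm hne, ha]))

theorem map_apply_eq_map_single_apply {σ : ι → ι} (hinj : Injective σ)
    (hσ : ∀ j a k, k ≠ σ j → F (Pi.single j a) k = 0) (u : ι → M) (j : ι) :
    F u (σ j) = F (Pi.single j (u j)) (σ j) := by
  conv_lhs => rw [← Finset.univ_sum_single u]
  rw [map_sum, Finset.sum_apply, Finset.sum_eq_single j]
  · exact fun j' _ hj' => hσ j' _ _ (hinj.ne hj').symm
  · simp

theorem bijective_map_single_apply (hbij : Bijective F) {σ : ι → ι} (hinj : Injective σ)
    (hσ : ∀ j a k, k ≠ σ j → F (Pi.single j a) k = 0) (j : ι) :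
    Bijective fun a => F (Pi.single j a) (σ j) := by
  refine ⟨fun a b hab => ?_, fun b => ?_⟩
  · have hFab : F (Pi.single j a) = F (Pi.single j b) := funext fun k => by
      rcases eq_or_ne k (σ j) with rfl | hk
      · exact hab
      · rw [hσ j a k hk, hσ j b k hk]
    simpa using hbij.1 hFab
  · obtain ⟨u, hu⟩ := hbij.2 (Pi.single (σ j) b)
    exact ⟨u j, by simp [← map_apply_eq_map_single_apply hinj hσ, hu]⟩

theorem exists_monomial_of_hammingNorm_map_eq [DecidableEq M] [Nontrivial M]
    (hF : ∀ x, hammingNorm (F x) = hammingNorm x) (hbij : Bijective F) :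
    ∃ (π : Equiv.Perm ι) (g : ι → M ≃ₗ[R] M), ∀ u i, F u i = g i (u (π i)) := by
  obtain ⟨σ, hσ⟩ := exists_map_single_apply_eq_zero hF
  have hinj := injective_of_map_single_apply_eq_zero hF hσ
  let e := Equiv.ofBijective σ hinj.bijective_of_finite
  let g (j : ι) : M ≃ₗ[R] M := LinearEquiv.ofBijective
    (LinearMap.proj (σ j) ∘ₗ F ∘ₗ LinearMap.single R (fun _ => M) j)
    (bijective_map_single_apply hbij hinj hσ j)
  refine ⟨e.symm, fun i => g (e.symm i), fun u i => ?_⟩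
  have hσe : σ (e.symm i) = i := e.apply_symm_apply i
  calc F u i = F u (σ (e.symm i)) := by rw [hσe]
    _ = g (e.symm i) (u (e.symm i)) := map_apply_eq_map_single_apply hinj hσ u (e.symm i)

end LinearIsometry

theorem stmt_9_general (K L : Type*) [Field K] [Field L]
    [Algebra K L] [DecidableEq L]
    (m : ℕ)
    (f : (Fin m → L) → (Fin m → L)) :
    (IsLinearMap K f ∧ Function.Bijective f ∧
      ∀ x y : Fin m → L, hammingDist (f x) (f y) = hammingDist x y) ↔
    ∃ (π : Equiv.Perm (Fin m)) (g : Fin m → (L ≃ₗ[K] L)),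
      ∀ (u : Fin m → L) (i : Fin m), f u i = g i (u (π i)) := by
  constructor
  · rintro ⟨hlin, hbij, hdist⟩
    refine exists_monomial_of_hammingNorm_map_eq (F := hlin.mk' f) (fun x => ?_) hbij
    simpa [hlin.map_zero] using hdist x 0
  · rintro ⟨π, g, hg⟩
    have hf : f = (LinearEquiv.funCongrLeft K L π).trans (LinearEquiv.piCongrRight g) := by
      ext u i
      simp [hg]
    refine ⟨hf ▸ LinearMap.isLinear _, hf ▸ LinearEquiv.bijective _, fun x y => ?_⟩
    rw [hf]
    exact (hammingDist_comp _ fun i => (g i).injective).trans (hammingDist_comp_perm π x y)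

theorem stmt_9 (K L : Type*) [Field K] [Fintype K] [Field L] [Fintype L]
    [Algebra K L] [DecidableEq L]
    (m : ℕ) (hm : 0 < m)
    (f : (Fin m → L) → (Fin m → L)) :
    (IsLinearMap K f ∧ Function.Bijective f ∧
      ∀ x y : Fin m → L, hammingDist (f x) (f y) = hammingDist x y) ↔
    ∃ (π : Equiv.Perm (Fin m)) (g : Fin m → (L ≃ₗ[K] L)),
      ∀ (u : Fin m → L) (i : Fin m), f u i = g i (u (π i)) :=
  stmt_9_general K L m f
end

section
/- Let F be a finite set with at least two elements and m a positive integer. A map f : F^m → F^m is a bijective isometry of the Hamming distance if and only if there exist a permutation π ∈ S_m and permutations σ_1, ..., σ_m of F such that f(x)_i = σ_i(x_{π(i)}) for all x ∈ F^m and all i ∈ {1,...,m}. -/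
/-!
Fix a base point `c`. The points at distance one from `c` are the updates `c[j ↦ a]` with
`a ≠ c j`; two of them are at distance at most one exactly when they change the same
coordinate. Hence an isometry `f` sends each line `{c[j ↦ a]}` into a line through `f c` in a
single direction `p j`, and `p` is injective, hence a permutation. A coordinate is read off
from distances, `x j = a ↔ d(x, c[j ↦ a]) < d(x, c)` for `a ≠ c j`, so `f x (p j)` only
depends on `x j`, through the injective map `a ↦ f (c[j ↦ a]) (p j)`.
-/

open Function Finset

section Hamming

variable {ι : Type*} {β : ι → Type*} [Fintype ι] [DecidableEq ι] [∀ i, DecidableEq (β i)]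

theorem hammingDist_update_right_add (x z : ∀ i, β i) (j : ι) (a : β j) :
    hammingDist x (update z j a) + (if x j = z j then 0 else 1) =
      hammingDist x z + (if x j = a then 0 else 1) := by
  have hsplit : ∀ y : ∀ i, β i, hammingDist x y =
      (if x j ≠ y j then 1 else 0) + ∑ i ∈ {j}ᶜ, if x i ≠ y i then 1 else 0 := fun y => by
    rw [hammingDist, card_filter, Fintype.sum_eq_add_sum_compl j]
  have hrest : ∑ i ∈ {j}ᶜ, (if x i ≠ update z j a i then 1 else 0) =
      ∑ i ∈ {j}ᶜ, if x i ≠ z i then 1 else 0 :=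
    sum_congr rfl fun i hi => by rw [update_of_ne (by simpa using hi)]
  rw [hsplit, hsplit z, hrest, update_self]
  simp only [ne_eq, ite_not]
  split_ifs <;> omega

theorem hammingDist_self_update (x : ∀ i, β i) (j : ι) (a : β j) :
    hammingDist x (update x j a) = if x j = a then 0 else 1 := by
  simpa using hammingDist_update_right_add x x j a

theorem hammingDist_update_right_lt_iff (x z : ∀ i, β i) {j : ι} {a : β j} (ha : a ≠ z j) :
    hammingDist x (update z j a) < hammingDist x z ↔ x j = a := by
  have := hammingDist_update_right_add x z j a
  by_cases hxa : x j = a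
  · subst hxa
    simp only [if_neg ha, if_true, iff_true] at this ⊢
    omega
  · simp only [hxa, if_false, iff_false, not_lt] at this ⊢
    split_ifs at this <;> omega

theorem hammingDist_update_update_le_one (z : ∀ i, β i) (j : ι) (a b : β j) :
    hammingDist (update z j a) (update z j b) ≤ 1 := by
  rw [← update_idem a b z, hammingDist_self_update]
  split_ifs <;> omega

theorem eq_of_hammingDist_update_update_le_one (z : ∀ i, β i) {j k : ι} {a : β j} {b : β k}
    (ha : a ≠ z j) (hb : b ≠ z k) (h : hammingDist (update z j a) (update z k b) ≤ 1) :
    j = k := by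
  by_contra hjk
  refine absurd (one_lt_card.mpr ⟨j, ?_, k, ?_, hjk⟩) h.not_gt
  · simp [update_of_ne hjk, ha]
  · simp [update_of_ne (Ne.symm hjk), hb.symm]

theorem exists_eq_update_of_hammingDist_eq_one {x z : ∀ i, β i} (h : hammingDist x z = 1) :
    ∃ k, x k ≠ z k ∧ x = update z k (x k) := by
  obtain ⟨k, hk⟩ := card_eq_one.mp h
  have hmem : ∀ i, x i ≠ z i ↔ i = k := fun i => by
    simpa using congrArg (i ∈ ·) hk
  refine ⟨k, (hmem k).mpr rfl, (update_eq_iff.mpr ⟨rfl, fun i hi => ?_⟩).symm⟩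
  exact of_not_not fun hne => hi ((hmem i).mp (Ne.symm hne))

end Hamming

section Monomial

variable {ι β : Type*} [Fintype ι] [DecidableEq β]

theorem hammingDist_comp_equiv {ι' : Type*} [Fintype ι'] (e : ι' ≃ ι) (x y : ι → β) :
    hammingDist (x ∘ e) (y ∘ e) = hammingDist x y :=
  card_equiv e (by simp)

theorem hammingDist_perm_apply (π : Equiv.Perm ι) (σ : ι → Equiv.Perm β) (x y : ι → β) :
    hammingDist (fun i => σ i (x (π i))) (fun i => σ i (y (π i))) = hammingDist x y :=
  (hammingDist_comp (fun i => σ i) fun i => (σ i).injective).trans (hammingDist_comp_equiv π x y)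

end Monomial

section Isometry

variable {ι β : Type*} [Fintype ι] [DecidableEq β]
  {f : (ι → β) → (ι → β)} (hf : ∀ x y, hammingDist (f x) (f y) = hammingDist x y)
include hf

theorem injective_of_hammingDist_eq : Injective f := fun x y hxy =>
  hammingDist_eq_zero.mp (hf x y ▸ hammingDist_eq_zero.mpr hxy)

variable [DecidableEq ι]

theorem exists_update_apply_eq [Nontrivial β] (c : ι → β) (j : ι) :
    ∃ k, ∀ a, f (update c j a) = update (f c) k (f (update c j a) k) := by
  have hsphere : ∀ a ≠ c j, ∃ k, f (update c j a) k ≠ f c k ∧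
      f (update c j a) = update (f c) k (f (update c j a) k) := fun a ha =>
    exists_eq_update_of_hammingDist_eq_one <| by
      rw [hf, hammingDist_comm, hammingDist_self_update, if_neg ha.symm]
  obtain ⟨a₀, ha₀⟩ := exists_ne (c j)
  obtain ⟨k, hk, hfk⟩ := hsphere a₀ ha₀
  refine ⟨k, fun a => ?_⟩
  by_cases ha : a = c j
  · simp [ha]
  obtain ⟨k', hk', hfk'⟩ := hsphere a ha
  suffices k' = k by rwa [← this]
  refine eq_of_hammingDist_update_update_le_one (f c) hk' hk ?_
  rw [← hfk, ← hfk', hf]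
  exact hammingDist_update_update_le_one c j a a₀

variable {c : ι → β} {p : ι → ι}
  (hp : ∀ j a, f (update c j a) = update (f c) (p j) (f (update c j a) (p j)))
include hp

theorem injective_of_update_apply_eq [Nontrivial β] : Injective p := by
  intro j l hjl
  obtain ⟨a, ha⟩ := exists_ne (c j)
  obtain ⟨b, hb⟩ := exists_ne (c l)
  refine eq_of_hammingDist_update_update_le_one c ha hb ?_
  rw [← hf, hp j, hp l, hjl]
  exact hammingDist_update_update_le_one _ _ _ _

theorem injective_update_apply (j : ι) : Injective fun a => f (update c j a) (p j) := by
  intro a b hab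
  have hfab : f (update c j a) = f (update c j b) := by
    rw [hp j a, hp j b]
    exact congrArg _ hab
  simpa using congrFun (injective_of_hammingDist_eq hf hfab) j

theorem apply_eq_of_update_apply_eq [Finite β] (x : ι → β) (j : ι) :
    f x (p j) = f (update c j (x j)) (p j) := by
  set s := fun a => f (update c j a) (p j)
  have hs_inj : Injective s := injective_update_apply hf hp j
  have hsc : s (c j) = f c (p j) := by simp [s]
  have hcoord : ∀ a ≠ c j, x j = a ↔ f x (p j) = s a := fun a ha => by
    rw [← hammingDist_update_right_lt_iff x c ha,
      ← hammingDist_update_right_lt_iff (f x) (f c) (hsc ▸ hs_inj.ne ha), ← hp j a, hf, hf]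
  obtain ⟨t, ht⟩ := Finite.injective_iff_surjective.mp hs_inj (f x (p j))
  by_cases hx : x j = c j
  · by_cases htc : t = c j
    · rw [← ht, htc, hx]
    · exact absurd ((hcoord t htc).mpr ht.symm) (hx ▸ Ne.symm htc)
  · exact (hcoord _ hx).mp rfl

omit hp

theorem exists_perm_of_hammingDist_eq [Finite β] [Nontrivial β] :
    ∃ (π : Equiv.Perm ι) (σ : ι → Equiv.Perm β), ∀ x i, f x i = σ i (x (π i)) := by
  obtain ⟨c⟩ : Nonempty (ι → β) := inferInstance
  choose p hp using exists_update_apply_eq hf c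
  let π := (Equiv.ofBijective p
    (Finite.injective_iff_bijective.mp (injective_of_update_apply_eq hf hp))).symm
  have hpπ : ∀ i, p (π i) = i := Equiv.ofBijective_apply_symm_apply _ _
  refine ⟨π, fun i => Equiv.ofBijective _
    (Finite.injective_iff_bijective.mp (injective_update_apply hf hp (π i))), fun x i => ?_⟩
  rw [Equiv.ofBijective_apply, ← apply_eq_of_update_apply_eq hf hp, hpπ]

end Isometry

theorem stmt_10_general (F : Type*) [Fintype F] [DecidableEq F] (hF : 2 ≤ Fintype.card F)
    (m : ℕ)
    (f : (Fin m → F) → (Fin m → F)) :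
    (Function.Bijective f ∧
      ∀ x y : Fin m → F, hammingDist (f x) (f y) = hammingDist x y) ↔
    ∃ (π : Equiv.Perm (Fin m)) (σ : Fin m → Equiv.Perm F),
      ∀ (x : Fin m → F) (i : Fin m), f x i = σ i (x (π i)) := by
  constructor
  · rintro ⟨-, hf⟩
    have : Nontrivial F := Fintype.one_lt_card_iff_nontrivial.mp hF
    exact exists_perm_of_hammingDist_eq hf
  · rintro ⟨π, σ, hfσ⟩
    have hf : ∀ x y, hammingDist (f x) (f y) = hammingDist x y := fun x y => by
      rw [funext (hfσ x), funext (hfσ y)]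
      exact hammingDist_perm_apply π σ x y
    exact ⟨Finite.injective_iff_bijective.mp (injective_of_hammingDist_eq hf), hf⟩

theorem stmt_10 (F : Type*) [Fintype F] [DecidableEq F] (hF : 2 ≤ Fintype.card F)
    (m : ℕ) (hm : 0 < m)
    (f : (Fin m → F) → (Fin m → F)) :
    (Function.Bijective f ∧
      ∀ x y : Fin m → F, hammingDist (f x) (f y) = hammingDist x y) ↔
    ∃ (π : Equiv.Perm (Fin m)) (σ : Fin m → Equiv.Perm F),
      ∀ (x : Fin m → F) (i : Fin m), f x i = σ i (x (π i)) :=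
  stmt_10_general F hF m f
end

section
/- Let K ⊆ L be finite fields, U a finite-dimensional K-vector space, and λ = (λ_1, ..., λ_m) with λ_i ∈ Hom_K(U, L). For each i let V_i = λ_i^*(L) ⊆ U be the image of the dual map. Then for every u ∈ U: wt(λ(u)) = m − ∑_{v ∈ U} (∑_{i=1}^m (1/|V_i|)·1_{V_i}(v)) · χ_v(u), where χ_v is the character of U associated to v via a fixed nondegenerate pairing and nontrivial character of K. -/
/-!
Swapping the two sums, the `i`-th contribution is `|Vᵢ|⁻¹ ∑_{v ∈ Vᵢ} π(v ⬝ᵥ u)`. Since `Vᵢ` is the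
column space of `Mᵢ`, the functional `v ↦ v ⬝ᵥ u` vanishes on `Vᵢ` exactly when `Mᵢᵀ u = 0`.
Otherwise it is a nonzero, hence surjective, functional `Vᵢ → K`, so composing it with `π` gives a
nontrivial character of `Vᵢ`, whose sum vanishes. Thus the `i`-th contribution is `1` if
`λᵢ(u) = 0` and `0` otherwise, and the total is `m - wt(λ(u))`.
-/

open Matrix

theorem AddChar.sum_comp_linearMap {K W R : Type*} [Field K] [AddCommGroup W] [Module K W]
    [Fintype W] [CommRing R] [IsDomain R] {π : AddChar K R} (hπ : π ≠ 1) (f : W →ₗ[K] K)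
    [Decidable (f = 0)] :
    ∑ w, π (f w) = if f = 0 then (Fintype.card W : R) else 0 := by
  split_ifs with hf
  · simp [hf]
  obtain ⟨a, ha⟩ := AddChar.ne_one_iff.1 hπ
  obtain ⟨w, rfl⟩ := LinearMap.surjective hf a
  exact AddChar.sum_eq_zero_of_ne_one (ψ := π.compAddMonoidHom f.toAddMonoidHom)
    (AddChar.ne_one_iff.2 ⟨w, ha⟩)

theorem Matrix.forall_mem_range_mulVecLin_dotProduct_eq_zero_iff {K ι κ : Type*} [CommRing K]
    [Fintype ι] [Fintype κ] (M : Matrix ι κ K) (u : ι → K) :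
    (∀ v ∈ LinearMap.range M.mulVecLin, v ⬝ᵥ u = 0) ↔ Mᵀ *ᵥ u = 0 := by
  simp only [LinearMap.mem_range, forall_exists_index, forall_apply_eq_imp_iff, mulVecLin_apply,
    mulVec_transpose, ← dotProduct_eq_zero_iff, dotProduct_comm _ u, dotProduct_mulVec]

-- `[DecidableEq ι]` keeps the `Fintype (ι → K)` instance from becoming the classical one.
open Classical in
theorem Submodule.sum_indicator_mul_addChar_dotProduct {K ι R : Type*} [Field K] [Fintype K]
    [Fintype ι] [DecidableEq ι] [CommRing R] [IsDomain R] {π : AddChar K R} (hπ : π ≠ 1)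
    (W : Submodule K (ι → K)) (u : ι → K) :
    ∑ v, (W : Set (ι → K)).indicator 1 v * π (v ⬝ᵥ u) =
      if ∀ w ∈ W, w ⬝ᵥ u = 0 then (Nat.card W : R) else 0 := by
  let f : W →ₗ[K] K := (dotProductBilin K K).flip u ∘ₗ W.subtype
  have hf : f = 0 ↔ ∀ w ∈ W, w ⬝ᵥ u = 0 := by
    simp [f, LinearMap.ext_iff]
  calc ∑ v, (W : Set (ι → K)).indicator 1 v * π (v ⬝ᵥ u)
      = ∑ w : W, π (f w) := by
        simp only [Set.indicator_apply, Pi.one_apply, ite_mul, one_mul, zero_mul]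
        rw [← Finset.sum_filter]
        exact Finset.sum_subtype _ (by simp) _
    _ = _ := by
        rw [AddChar.sum_comp_linearMap hπ, Nat.card_eq_fintype_card]
        exact if_congr hf rfl rfl

theorem stmt_12 (K : Type*) [Field K] [Fintype K] [DecidableEq K]
    (k n m : ℕ)
    (M : Fin m → Matrix (Fin k) (Fin n) K)
    (V : Fin m → Submodule K (Fin k → K))
    (hV : ∀ i, V i = LinearMap.range (Matrix.mulVecLin (M i)))
    (π : AddChar K ℂ) (hπ : π ≠ 1) :
    ∀ u : Fin k → K,
      ((Finset.univ.filter fun i : Fin m => (M i).transpose.mulVec u ≠ 0).card : ℂ) =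
      m - ∑ v : Fin k → K,
        (∑ i : Fin m, (Nat.card (V i) : ℂ)⁻¹ *
          Set.indicator (V i : Set (Fin k → K)) 1 v) * π (dotProduct v u) := by
  intro u
  have term_eq : ∀ i, ∑ v, (Nat.card (V i) : ℂ)⁻¹ * (V i : Set (Fin k → K)).indicator 1 v *
      π (v ⬝ᵥ u) = if (M i)ᵀ *ᵥ u = 0 then 1 else 0 := by
    intro i
    have hcard : (Nat.card (V i) : ℂ) ≠ 0 := Nat.cast_ne_zero.2 Nat.card_pos.ne'
    have hperp : (∀ w ∈ V i, w ⬝ᵥ u = 0) ↔ (M i)ᵀ *ᵥ u = 0 :=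
      hV i ▸ forall_mem_range_mulVecLin_dotProduct_eq_zero_iff (M i) u
    simp_rw [mul_assoc]
    rw [← Finset.mul_sum, Submodule.sum_indicator_mul_addChar_dotProduct hπ]
    simp only [hperp]
    split_ifs
    exacts [inv_mul_cancel₀ hcard, mul_zero _]
  have card_add := Finset.card_filter_add_card_filter_not (s := Finset.univ)
    (fun i : Fin m => (M i)ᵀ *ᵥ u = 0)
  simp only [Finset.sum_mul, Finset.sum_comm (s := Finset.univ (α := Fin k → K)), term_eq,
    Finset.sum_boole, Finset.card_univ, Fintype.card_fin] at card_add ⊢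
  rw [eq_sub_iff_add_eq', ← Nat.cast_add, card_add]
end

section
/- Let C be a K-linear code in L^m with generator matrix A ∈ M_{k×m}(L), and let (V_1, ..., V_m) be the tuple of column spaces of A (over K). Then dim_K C = dim_K (V_1 + ... + V_m). -/
/-!
Expanding every entry of `A` in the basis `b` turns `A` into a `k × (m n)` matrix over `K`.
Its rows are the images of the rows of `A` under a `K`-linear isomorphism `L^m ≃ K^(m n)`, so
they span a space of dimension `dim_K C`; its columns are the vectors spanning the column spaces
`V_j`. Row rank equals column rank.
-/

open Module Submodule

section BasisExpansion

variable {K L : Type*} [Field K] [Field L] [Algebra K L] {ι κ μ : Type*}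

noncomputable def basisExpansion (b : Basis ι K L) (A : κ → μ → L) : Matrix κ (μ × ι) K :=
  fun i p => b.repr (A i p.1) p.2

variable [Fintype ι] [Fintype μ]

theorem finrank_span_range_eq_rank_basisExpansion [Fintype κ] (b : Basis ι K L)
    (A : κ → μ → L) : finrank K (span K (Set.range A)) = (basisExpansion b A).rank := by
  let e : (μ → L) ≃ₗ[K] (μ × ι → K) :=
    (LinearEquiv.piCongrRight fun _ => b.equivFun).trans (LinearEquiv.curry K K μ ι).symm
  have hrows : Set.range (basisExpansion b A).row =
      (e : (μ → L) →ₗ[K] (μ × ι → K)) '' Set.range A := by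
    rw [← Set.range_comp]
    rfl
  rw [Matrix.rank_eq_finrank_span_row, hrows, span_image, LinearEquiv.finrank_map_eq]

theorem rank_basisExpansion_eq_finrank_iSup (b : Basis ι K L) (A : κ → μ → L) :
    (basisExpansion b A).rank = finrank K
      (⨆ j, span K (Set.range fun t : ι => fun i : κ => b.repr (A i j) t) :
        Submodule K (κ → K)) := by
  have hcols : Set.range (basisExpansion b A).col =
      ⋃ j, Set.range fun t : ι => fun i : κ => b.repr (A i j) t := by
    ext x
    simp only [Set.mem_range, Set.mem_iUnion, Prod.exists]
    rfl
  rw [Matrix.rank_eq_finrank_span_cols, iSup_span, hcols]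

end BasisExpansion

theorem stmt_14_general (K L : Type*) [Field K] [Field L] [Algebra K L]
    (n : ℕ) (b : Module.Basis (Fin n) K L)
    (k m : ℕ) (A : Fin k → (Fin m → L))
    (C : Submodule K (Fin m → L)) (hC : C = Submodule.span K (Set.range A))
    (V : Fin m → Submodule K (Fin k → K))
    (hV : ∀ j, V j = Submodule.span K
      (Set.range fun t : Fin n => fun i : Fin k => b.repr (A i j) t)) :
    Module.finrank K C = Module.finrank K (⨆ j, V j : Submodule K (Fin k → K)) := by
  rw [hC, iSup_congr hV, finrank_span_range_eq_rank_basisExpansion b,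
    rank_basisExpansion_eq_finrank_iSup]

theorem stmt_14 (K L : Type*) [Field K] [Fintype K] [Field L] [Fintype L] [Algebra K L]
    (n : ℕ) (b : Module.Basis (Fin n) K L)
    (k m : ℕ) (A : Fin k → (Fin m → L)) (hA : LinearIndependent K A)
    (C : Submodule K (Fin m → L)) (hC : C = Submodule.span K (Set.range A))
    (V : Fin m → Submodule K (Fin k → K))
    (hV : ∀ j, V j = Submodule.span K
      (Set.range fun t : Fin n => fun i : Fin k => b.repr (A i j) t)) :
    Module.finrank K C = Module.finrank K (⨆ j, V j : Submodule K (Fin k → K)) :=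
  stmt_14_general K L n b k m A C hC V hV
end

section
/- Let K ⊆ L be finite fields, C ⊆ L^m a K-linear code with generator matrix A giving column spaces (V_1,...,V_m), and f : C → L^m a K-linear map with induced matrix A' giving column spaces (U_1,...,U_m). Then f is an isometry (preserves Hamming weight) if and only if ∑_{i=1}^m (1/|V_i|)·1_{V_i} = ∑_{i=1}^m (1/|U_i|)·1_{U_i} as functions on K^k, where k = dim_K C. -/
/-!
A codeword is `∑ i, w i • A i` with `w ∈ K^k`, and its `j`-th coordinate vanishes iff `w` is
orthogonal to `V j` for the dot product. Hence its weight is `m - ∑ j, 1_{(V j)ᗮ} w`, and `f` is an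
isometry iff `∑ j, 1_{(V j)ᗮ} = ∑ j, 1_{(U j)ᗮ}`. The hyperplane transform
`T g w = ∑_{x ⬝ᵥ w = 0} g x` exchanges the two kinds of sums: counting the kernel of
`x ↦ x ⬝ᵥ w` on a subspace `W` gives `q • T (1_W / |W|) = 1 + (q - 1) • 1_{Wᗮ}`, and applied to `Wᗮ`
(with `|Wᗮ| = q^k / |W|`) it gives `q • T 1_{Wᗮ} = (q^k / |W|) • (1 + (q - 1) • 1_W)`. So each
equality of sums implies the other, the constant terms being matched by evaluating at `w = 0`.
-/

open LinearMap LinearMap.BilinForm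

theorem LinearMap.card_ker_mul_card_of_ne_zero {K M : Type*} [Field K] [AddCommGroup M]
    [Module K M] {φ : M →ₗ[K] K} (hφ : φ ≠ 0) :
    Nat.card (ker φ) * Nat.card K = Nat.card M := by
  rw [Submodule.card_eq_card_quotient_mul_card (ker φ),
    Nat.card_congr (φ.quotKerEquivOfSurjective (surjective_of_ne_zero hφ)).toEquiv]

theorem LinearMap.apply_eq_sum_smul_of_mem_span_range {R M N ι : Type*} [Semiring R]
    [AddCommMonoid M] [Module R M] [AddCommMonoid N] [Module R N] [Fintype ι] {v : ι → M}
    (f : Submodule.span R (Set.range v) →ₗ[R] N) {c : Submodule.span R (Set.range v)} {w : ι → R}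
    (hc : ∑ i, w i • v i = c) :
    f c = ∑ i, w i • f ⟨v i, Submodule.subset_span (Set.mem_range_self i)⟩ := by
  simp_rw [← map_smul, ← map_sum]
  congr
  ext
  simp [hc]

namespace LinearMap.BilinForm

variable {K V : Type*} [Field K] [AddCommGroup V] [Module K V] {B : LinearMap.BilinForm K V}

theorem mem_orthogonal_iff_le_ker {W : Submodule K V} {w : V} :
    w ∈ B.orthogonal W ↔ W ≤ ker (B.flip w) := by
  simp [SetLike.le_def, mem_orthogonal_iff]

theorem mem_orthogonal_span_iff {s : Set V} {w : V} :
    w ∈ B.orthogonal (Submodule.span K s) ↔ ∀ x ∈ s, B x w = 0 := by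
  rw [mem_orthogonal_iff_le_ker, Submodule.span_le]
  rfl

theorem card_mul_card_orthogonal [Fintype K] [Fintype V] (hB : B.Nondegenerate)
    (W : Submodule K V) : Nat.card W * Nat.card (B.orthogonal W) = Nat.card V := by
  classical
  simp only [Nat.card_eq_fintype_card]
  rw [Module.card_eq_pow_finrank (K := K) (V := W),
    Module.card_eq_pow_finrank (K := K) (V := B.orthogonal W),
    Module.card_eq_pow_finrank (K := K) (V := V), ← pow_add, finrank_orthogonal hB,
    Nat.add_sub_cancel' W.finrank_le]

variable [Fintype V] [DecidableEq K]

def hyperplaneSum (B : LinearMap.BilinForm K V) (g : V → ℝ) (w : V) : ℝ :=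
  ∑ x with B x w = 0, g x

theorem hyperplaneSum_indicator_eq_card_ker (W : Submodule K V) (w : V) :
    hyperplaneSum B ((W : Set V).indicator 1) w = Nat.card (ker ((B.flip w).domRestrict W)) := by
  classical
  simp only [hyperplaneSum, Set.indicator_apply, Pi.one_apply, SetLike.mem_coe, Finset.sum_boole,
    Finset.filter_filter]
  norm_cast
  rw [← Fintype.card_subtype, ← Nat.card_eq_fintype_card]
  exact Nat.card_congr ((Equiv.subtypeSubtypeEquivSubtypeInter (· ∈ W) (B · w = 0)).trans
    (Equiv.subtypeEquivRight fun _ => and_comm)).symm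

theorem card_mul_hyperplaneSum_indicator [Fintype K] (W : Submodule K V) (w : V) :
    (Fintype.card K : ℝ) * hyperplaneSum B ((W : Set V).indicator 1) w =
      Nat.card W * (1 + (Fintype.card K - 1) * (B.orthogonal W : Set V).indicator 1 w) := by
  rw [hyperplaneSum_indicator_eq_card_ker]
  by_cases hw : w ∈ B.orthogonal W
  · have : (B.flip w).domRestrict W = 0 := by
      ext x; exact mem_orthogonal_iff_le_ker.mp hw x.2
    rw [this, ker_zero, Set.indicator_of_mem hw]
    simp [mul_comm]
  · have hne : (B.flip w).domRestrict W ≠ 0 := by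
      contrapose! hw
      exact mem_orthogonal_iff_le_ker.mpr fun x hx => LinearMap.congr_fun hw ⟨x, hx⟩
    rw [← card_ker_mul_card_of_ne_zero hne, Set.indicator_of_notMem hw,
      Nat.card_eq_fintype_card (α := K)]
    push_cast
    ring

theorem hyperplaneSum_sum {ι : Type*} [Fintype ι] (g : ι → V → ℝ) (w : V) :
    hyperplaneSum B (fun x => ∑ j, g j x) w = ∑ j, hyperplaneSum B (g j) w :=
  Finset.sum_comm

theorem hyperplaneSum_const_mul (c : ℝ) (g : V → ℝ) (w : V) :
    hyperplaneSum B (fun x => c * g x) w = c * hyperplaneSum B g w :=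
  (Finset.mul_sum _ _ _).symm

end LinearMap.BilinForm

section IndicatorSums

variable {K V ι : Type*} [Field K] [AddCommGroup V] [Module K V] [Fintype ι]

noncomputable def normalizedIndicatorSum (W : ι → Submodule K V) (w : V) : ℝ :=
  ∑ j, (Nat.card (W j) : ℝ)⁻¹ * (W j : Set V).indicator 1 w

noncomputable def orthogonalIndicatorSum (B : LinearMap.BilinForm K V) (W : ι → Submodule K V)
    (w : V) : ℝ :=
  ∑ j, (B.orthogonal (W j) : Set V).indicator 1 w

variable [Fintype K] [Fintype V] {B : LinearMap.BilinForm K V}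

theorem card_mul_hyperplaneSum_normalizedIndicatorSum [DecidableEq K] (W : ι → Submodule K V)
    (w : V) :
    (Fintype.card K : ℝ) * hyperplaneSum B (normalizedIndicatorSum W) w =
      Fintype.card ι + (Fintype.card K - 1) * orthogonalIndicatorSum B W w := by
  have hterm (j : ι) : (Fintype.card K : ℝ) *
      ((Nat.card (W j) : ℝ)⁻¹ * hyperplaneSum B ((W j : Set V).indicator 1) w) =
        1 + (Fintype.card K - 1) * (B.orthogonal (W j) : Set V).indicator 1 w := by
    rw [mul_left_comm, card_mul_hyperplaneSum_indicator,
      inv_mul_cancel_left₀ (Nat.cast_ne_zero.mpr Nat.card_pos.ne')]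
  unfold normalizedIndicatorSum orthogonalIndicatorSum
  simp only [hyperplaneSum_sum, hyperplaneSum_const_mul, Finset.mul_sum, hterm,
    Finset.sum_add_distrib]
  simp

theorem card_mul_hyperplaneSum_orthogonalIndicatorSum [DecidableEq K] (hB : B.Nondegenerate)
    (hB' : B.IsRefl) (W : ι → Submodule K V) (w : V) :
    (Fintype.card K : ℝ) * hyperplaneSum B (orthogonalIndicatorSum B W) w =
      Fintype.card V * (normalizedIndicatorSum W 0 +
        (Fintype.card K - 1) * normalizedIndicatorSum W w) := by
  have hterm (j : ι) : (Fintype.card K : ℝ) *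
      hyperplaneSum B ((B.orthogonal (W j) : Set V).indicator 1) w =
        Fintype.card V * ((Nat.card (W j) : ℝ)⁻¹ +
          (Fintype.card K - 1) * ((Nat.card (W j) : ℝ)⁻¹ * (W j : Set V).indicator 1 w)) := by
    have hW : (Nat.card (W j) : ℝ) ≠ 0 := Nat.cast_ne_zero.mpr Nat.card_pos.ne'
    have hcard :
        (Nat.card (B.orthogonal (W j)) : ℝ) = Fintype.card V * (Nat.card (W j) : ℝ)⁻¹ := by
      rw [← Nat.card_eq_fintype_card, ← card_mul_card_orthogonal hB (W j), Nat.cast_mul,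
        mul_comm, inv_mul_cancel_left₀ hW]
    rw [card_mul_hyperplaneSum_indicator, orthogonal_orthogonal hB hB', hcard]
    ring
  have hzero (j : ι) : (W j : Set V).indicator (1 : V → ℝ) 0 = 1 :=
    Set.indicator_of_mem (W j).zero_mem _
  unfold orthogonalIndicatorSum normalizedIndicatorSum
  simp only [hyperplaneSum_sum, Finset.mul_sum, hterm, hzero, mul_one]
  rw [← Finset.mul_sum, ← Finset.sum_add_distrib, Finset.mul_sum]

theorem normalizedIndicatorSum_eq_iff (hB : B.Nondegenerate) (hB' : B.IsRefl)
    (W W' : ι → Submodule K V) :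
    normalizedIndicatorSum W = normalizedIndicatorSum W' ↔
      orthogonalIndicatorSum B W = orthogonalIndicatorSum B W' := by
  classical
  have hq : (1 : ℝ) < Fintype.card K := mod_cast Fintype.one_lt_card
  constructor
  · intro h
    funext w
    have := card_mul_hyperplaneSum_normalizedIndicatorSum (B := B) W w
    rw [h, card_mul_hyperplaneSum_normalizedIndicatorSum] at this
    exact (mul_left_cancel₀ (by linarith) (add_left_cancel this)).symm
  · intro h
    have key (w : V) :
        normalizedIndicatorSum W 0 + (Fintype.card K - 1) * normalizedIndicatorSum W w =
          normalizedIndicatorSum W' 0 + (Fintype.card K - 1) * normalizedIndicatorSum W' w := by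
      have := card_mul_hyperplaneSum_orthogonalIndicatorSum hB hB' W w
      rw [h, card_mul_hyperplaneSum_orthogonalIndicatorSum hB hB'] at this
      exact (mul_left_cancel₀ (Nat.cast_ne_zero.mpr Fintype.card_ne_zero) this).symm
    have h0 : normalizedIndicatorSum W 0 = normalizedIndicatorSum W' 0 :=
      mul_left_cancel₀ (by linarith : (Fintype.card K : ℝ) ≠ 0) (by linear_combination key 0)
    funext w
    have := key w
    rw [h0] at this
    exact mul_left_cancel₀ (by linarith) (add_left_cancel this)

end IndicatorSums

section DotProduct

variable {K κ : Type*} [Field K] [Fintype κ]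

theorem dotProductBilin_isRefl : LinearMap.BilinForm.IsRefl (dotProductBilin K K (m := κ)) :=
  fun x y h => by simpa [dotProduct_comm] using h

theorem dotProductBilin_nondegenerate :
    LinearMap.BilinForm.Nondegenerate (dotProductBilin K K (m := κ)) := by
  classical
  refine ⟨fun x hx => funext fun i => ?_, fun y hy => funext fun i => ?_⟩
  · simpa using hx (Pi.single i 1)
  · simpa using hy (Pi.single i 1)

end DotProduct

section ColumnSpace

variable {K L ι κ μ : Type*} [Field K] [Field L] [Algebra K L] [Fintype κ]

def columnSpace (b : Module.Basis ι K L) (M : κ → μ → L) (j : μ) : Submodule K (κ → K) :=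
  Submodule.span K (Set.range fun t i => b.repr (M i j) t)

theorem sum_smul_apply_eq_zero_iff_mem_orthogonal (b : Module.Basis ι K L) (M : κ → μ → L)
    (w : κ → K) (j : μ) :
    (∑ i, w i • M i) j = 0 ↔
      w ∈ LinearMap.BilinForm.orthogonal (dotProductBilin K K) (columnSpace b M j) := by
  rw [columnSpace, mem_orthogonal_span_iff, Set.forall_mem_range, ← b.forall_coord_eq_zero_iff]
  simp [Finset.sum_apply, dotProduct, mul_comm]

theorem hammingNorm_add_orthogonalIndicatorSum [DecidableEq L] [Fintype μ]
    (b : Module.Basis ι K L) (M : κ → μ → L) (w : κ → K) :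
    (hammingNorm (∑ i, w i • M i) : ℝ) +
      orthogonalIndicatorSum (dotProductBilin K K) (columnSpace b M) w = Fintype.card μ := by
  classical
  simp only [hammingNorm, orthogonalIndicatorSum, Set.indicator_apply, SetLike.mem_coe,
    ← sum_smul_apply_eq_zero_iff_mem_orthogonal b, Pi.one_apply, Finset.natCast_card_filter,
    ← Finset.sum_add_distrib]
  rw [← Finset.card_univ, Finset.card_eq_sum_ones, Nat.cast_sum]
  refine Finset.sum_congr rfl fun j _ => ?_
  split_ifs <;> simp_all

theorem hammingNorm_sum_smul_eq_iff [DecidableEq L] [Fintype μ] (b : Module.Basis ι K L)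
    (M M' : κ → μ → L) (w : κ → K) :
    hammingNorm (∑ i, w i • M i) = hammingNorm (∑ i, w i • M' i) ↔
      orthogonalIndicatorSum (dotProductBilin K K) (columnSpace b M) w =
        orthogonalIndicatorSum (dotProductBilin K K) (columnSpace b M') w := by
  have h := hammingNorm_add_orthogonalIndicatorSum b M w
  have h' := hammingNorm_add_orthogonalIndicatorSum b M' w
  constructor
  · intro hN
    rw [hN] at h
    linarith
  · intro hP
    exact_mod_cast
      (by linarith : (hammingNorm (∑ i, w i • M i) : ℝ) = hammingNorm (∑ i, w i • M' i))

end ColumnSpace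

theorem stmt_16_general (K L : Type*) [Field K] [Fintype K] [Field L]
    [Algebra K L] [DecidableEq L]
    (n : ℕ) (b : Module.Basis (Fin n) K L)
    (k m : ℕ) (A : Fin k → (Fin m → L))
    (f : (Submodule.span K (Set.range A) : Submodule K (Fin m → L)) →ₗ[K] (Fin m → L))
    (A' : Fin k → (Fin m → L))
    (hA' : ∀ i, A' i = f ⟨A i, Submodule.subset_span (Set.mem_range_self i)⟩)
    (V U : Fin m → Submodule K (Fin k → K))
    (hV : ∀ j, V j = Submodule.span K
      (Set.range fun t : Fin n => fun i : Fin k => b.repr (A i j) t))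
    (hU : ∀ j, U j = Submodule.span K
      (Set.range fun t : Fin n => fun i : Fin k => b.repr (A' i j) t)) :
    (∀ c : (Submodule.span K (Set.range A) : Submodule K (Fin m → L)),
        hammingNorm (f c) = hammingNorm (c : Fin m → L)) ↔
    (∀ w : Fin k → K,
      ∑ j : Fin m, (Nat.card (V j) : ℝ)⁻¹ * Set.indicator (V j : Set (Fin k → K)) 1 w =
      ∑ j : Fin m, (Nat.card (U j) : ℝ)⁻¹ * Set.indicator (U j : Set (Fin k → K)) 1 w) := by
  obtain rfl : V = columnSpace b A := funext hV
  obtain rfl : U = columnSpace b A' := funext hU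
  have hf {c : Submodule.span K (Set.range A)} {w : Fin k → K} (hc : ∑ i, w i • A i = c) :
      f c = ∑ i, w i • A' i := by
    simp_rw [hA']
    exact f.apply_eq_sum_smul_of_mem_span_range hc
  have hisometry : (∀ c : Submodule.span K (Set.range A),
      hammingNorm (f c) = hammingNorm (c : Fin m → L)) ↔
      ∀ w : Fin k → K, hammingNorm (∑ i, w i • A' i) = hammingNorm (∑ i, w i • A i) := by
    constructor
    · intro h w
      have := h ⟨_, (Submodule.mem_span_range_iff_exists_fun K).mpr ⟨w, rfl⟩⟩
      rwa [hf rfl] at this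
    · intro h c
      obtain ⟨w, hw⟩ := (Submodule.mem_span_range_iff_exists_fun K).mp c.2
      rw [hf hw, ← hw]
      exact h w
  rw [hisometry]
  simp only [hammingNorm_sum_smul_eq_iff b]
  rw [← funext_iff, eq_comm,
    ← normalizedIndicatorSum_eq_iff dotProductBilin_nondegenerate dotProductBilin_isRefl,
    funext_iff]
  rfl

theorem stmt_16 (K L : Type*) [Field K] [Fintype K] [Field L] [Fintype L]
    [Algebra K L] [DecidableEq L]
    (n : ℕ) (b : Module.Basis (Fin n) K L)
    (k m : ℕ) (A : Fin k → (Fin m → L)) (hA : LinearIndependent K A)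
    (f : (Submodule.span K (Set.range A) : Submodule K (Fin m → L)) →ₗ[K] (Fin m → L))
    (A' : Fin k → (Fin m → L))
    (hA' : ∀ i, A' i = f ⟨A i, Submodule.subset_span (Set.mem_range_self i)⟩)
    (V U : Fin m → Submodule K (Fin k → K))
    (hV : ∀ j, V j = Submodule.span K
      (Set.range fun t : Fin n => fun i : Fin k => b.repr (A i j) t))
    (hU : ∀ j, U j = Submodule.span K
      (Set.range fun t : Fin n => fun i : Fin k => b.repr (A' i j) t)) :
    (∀ c : (Submodule.span K (Set.range A) : Submodule K (Fin m → L)),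
        hammingNorm (f c) = hammingNorm (c : Fin m → L)) ↔
    (∀ w : Fin k → K,
      ∑ j : Fin m, (Nat.card (V j) : ℝ)⁻¹ * Set.indicator (V j : Set (Fin k → K)) 1 w =
      ∑ j : Fin m, (Nat.card (U j) : ℝ)⁻¹ * Set.indicator (U j : Set (Fin k → K)) 1 w) :=
  stmt_16_general K L n b k m A f A' hA' V U hV hU
end

section
/- Let K ⊊ L be finite fields and m ≤ |K|. Then every K-linear Hamming isometry f : C → L^m of a K-linear code C ⊆ L^m extends to a K-monomial map of L^m. -/
/-!
The kernels `U i` of the coordinate functionals `c ↦ c i` on `C` and the kernels `U' i` of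
`c ↦ f c i` satisfy: every `c` lies in as many `U i` as `U' i`, since `f` preserves weight.
A vector space over `K` is not a union of at most `|K|` proper subspaces, so a maximal member of
either family occurs in the other, and peeling it off shows that the multisets of kernels agree
when `m ≤ |K|`. Matching kernels by a permutation `π`, the functional `c ↦ f c i` factors through
`c ↦ c (π i)` by an isomorphism between their ranges, which extends to an automorphism of `L`.
-/

namespace Submodule

variable {K M : Type*} [Field K] [Fintype K] [AddCommGroup M] [Module K M]

theorem exists_forall_notMem_of_card_le_s18 (t : Multiset (Submodule K M))
    (ht : Multiset.card t ≤ Fintype.card K) (htop : ∀ W ∈ t, W ≠ ⊤) :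
    ∃ x, ∀ W ∈ t, x ∉ W := by
  induction t using Multiset.induction_on with
  | empty => simp
  | cons U t ih =>
    rw [Multiset.card_cons] at ht
    obtain ⟨x, hx⟩ := ih (by omega) fun W hW ↦ htop W (Multiset.mem_cons_of_mem hW)
    by_cases hxU : x ∈ U
    case neg => exact ⟨x, by simpa [hxU] using hx⟩
    obtain ⟨v, hv⟩ : ∃ v, v ∉ U := by
      by_contra! h
      exact htop U (Multiset.mem_cons_self U t) (eq_top_iff'.mpr h)
    -- The `|K|` points `v + c • x` avoid `U`, and each `W ∈ t` contains at most one of them.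
    have hvU (c : K) : v + c • x ∉ U := fun h ↦ hv <| by
      simpa using U.sub_mem h (U.smul_mem c hxU)
    by_contra! hcov
    choose F hFt hF using fun c : K ↦ hcov (v + c • x)
    replace hF (c : K) : F c ∈ t ∧ v + c • x ∈ F c := by
      rcases Multiset.mem_cons.mp (hFt c) with h | h
      · exact absurd (h ▸ hF c) (hvU c)
      · exact ⟨h, hF c⟩
    have hFinj : Function.Injective F := by
      intro c d hcd
      by_contra hne
      have : (c - d) • x ∈ F c := by
        convert (F c).sub_mem (hF c).2 (hcd ▸ (hF d).2) using 1
        module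
      exact hx (F c) (hF c).1 (((F c).smul_mem_iff (sub_ne_zero.mpr hne)).mp this)
    have := Finset.card_le_card_of_injOn F (s := Finset.univ) (t := t.toFinset)
      (fun c _ ↦ Multiset.mem_toFinset.mpr (hF c).1) hFinj.injOn
    have := Multiset.toFinset_card_le t
    simp only [Finset.card_univ] at *
    omega

open Classical in
theorem mem_of_countP_eq_of_not_lt {s t : Multiset (Submodule K M)}
    (ht : Multiset.card t ≤ Fintype.card K)
    (hcount : ∀ v : M, s.countP (v ∈ ·) = t.countP (v ∈ ·))
    {U : Submodule K M} (hU : U ∈ s) (hmax : ∀ W ∈ t, ¬U < W) : U ∈ t := by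
  by_contra hUt
  -- A vector of `U` outside every `W ∈ t` is counted by `s` but not by `t`.
  obtain ⟨x, hx⟩ := exists_forall_notMem_of_card_le_s18 (t.map (comap U.subtype))
    (by rwa [Multiset.card_map]) (by
      simp only [Multiset.mem_map, forall_exists_index, and_imp, forall_apply_eq_imp_iff₂,
        ne_eq, comap_subtype_eq_top]
      exact fun W hW hUW ↦ hmax W hW (hUW.lt_of_ne fun h ↦ hUt (h ▸ hW)))
  have h₁ : t.countP ((x : M) ∈ ·) = 0 :=
    Multiset.countP_eq_zero.mpr fun W hW ↦ hx _ (Multiset.mem_map_of_mem _ hW)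
  have h₂ : 0 < s.countP ((x : M) ∈ ·) := Multiset.countP_pos.mpr ⟨U, hU, x.2⟩
  exact h₂.ne' (h₁ ▸ hcount x)

open Classical in
theorem multiset_eq_of_countP_eq {s t : Multiset (Submodule K M)}
    (hs : Multiset.card s ≤ Fintype.card K) (ht : Multiset.card t ≤ Fintype.card K)
    (hcount : ∀ v : M, s.countP (v ∈ ·) = t.countP (v ∈ ·)) : s = t := by
  induction s using Multiset.strongInductionOn generalizing t with
  | ih s ih =>
  rcases (s + t).toFinset.eq_empty_or_nonempty with hst | hst
  · simp_all
  obtain ⟨U, hU⟩ := Finset.exists_maximal hst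
  have hmax : ∀ W ∈ s + t, ¬U < W := fun W hW ↦ hU.not_gt (Multiset.mem_toFinset.mpr hW)
  have hUs : U ∈ s := (Multiset.mem_add.mp (Multiset.mem_toFinset.mp hU.prop)).elim id fun hUt ↦
    mem_of_countP_eq_of_not_lt hs (fun v ↦ (hcount v).symm) hUt
      fun W hW ↦ hmax W (Multiset.mem_add.mpr (.inl hW))
  have hUt : U ∈ t := mem_of_countP_eq_of_not_lt ht hcount hUs
    fun W hW ↦ hmax W (Multiset.mem_add.mpr (.inr hW))
  rw [← Multiset.cons_erase hUs, ← Multiset.cons_erase hUt]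
  congr 1
  refine ih _ (Multiset.erase_lt.mpr hUs) ?_ ?_ fun v ↦ ?_
  · exact (Multiset.card_le_card (Multiset.erase_le U s)).trans hs
  · exact (Multiset.card_le_card (Multiset.erase_le U t)).trans ht
  · have := hcount v
    rw [← Multiset.cons_erase hUs, ← Multiset.cons_erase hUt, Multiset.countP_cons,
      Multiset.countP_cons] at this
    omega

end Submodule

theorem Equiv.Perm.exists_apply_eq_of_map_univ_val_eq {ι α : Type*} [Fintype ι] (a b : ι → α)
    (h : Multiset.map a Finset.univ.val = Multiset.map b Finset.univ.val) :
    ∃ σ : Equiv.Perm ι, ∀ i, a (σ i) = b i := by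
  classical
  have hfib (y : α) : Fintype.card {i // b i = y} = Fintype.card {i // a i = y} := by
    simpa [Fintype.card_subtype, Multiset.count_map, Finset.card, eq_comm]
      using congrArg (Multiset.count y) h.symm
  exact ⟨Equiv.ofFiberEquiv fun y ↦ Fintype.equivOfCardEq (hfib y), Equiv.ofFiberEquiv_map _⟩

theorem LinearMap.exists_linearEquiv_apply_eq_of_ker_eq {K V W : Type*} [Field K]
    [AddCommGroup V] [Module K V] [AddCommGroup W] [Module K W] [FiniteDimensional K W]
    (φ ψ : V →ₗ[K] W) (h : ker φ = ker ψ) : ∃ g : W ≃ₗ[K] W, ∀ v, ψ v = g (φ v) := by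
  let e : range φ ≃ₗ[K] range ψ :=
    φ.quotKerEquivRange.symm ≪≫ₗ Submodule.quotEquivOfEq _ _ h ≪≫ₗ ψ.quotKerEquivRange
  have he (v : V) : (e ⟨φ v, mem_range_self φ v⟩ : W) = ψ v := by
    have : φ.quotKerEquivRange.symm ⟨φ v, mem_range_self φ v⟩ = Submodule.Quotient.mk v :=
      φ.quotKerEquivRange.symm_apply_eq.mpr rfl
    simp [e, this]
  obtain ⟨g, hg⟩ := Submodule.exists_linearEquiv_restrict_eq e
  exact ⟨g, fun v ↦ by rw [← he, hg]⟩

theorem LinearMap.exists_perm_linearEquiv_of_hammingNorm_eq {ι K V W : Type*} [Fintype ι]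
    [Field K] [Fintype K] [AddCommGroup V] [Module K V] [AddCommGroup W] [Module K W]
    [FiniteDimensional K W] [DecidableEq W] (φ ψ : ι → V →ₗ[K] W)
    (hι : Fintype.card ι ≤ Fintype.card K)
    (hφψ : ∀ v, hammingNorm (fun i ↦ φ i v) = hammingNorm (fun i ↦ ψ i v)) :
    ∃ (σ : Equiv.Perm ι) (g : ι → W ≃ₗ[K] W), ∀ i v, ψ i v = g i (φ (σ i) v) := by
  classical
  have hzero (χ : ι → V →ₗ[K] W) (v : V) :
      (Finset.univ.val.map fun i ↦ ker (χ i)).countP (v ∈ ·) =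
        Fintype.card ι - hammingNorm (fun i ↦ χ i v) := by
    rw [Multiset.countP_map, ← Finset.card_univ, hammingNorm,
      ← Finset.card_filter_add_card_filter_not (fun i ↦ χ i v ≠ 0)]
    simp [Finset.card, Finset.filter_val]
  obtain ⟨σ, hσ⟩ := Equiv.Perm.exists_apply_eq_of_map_univ_val_eq (fun i ↦ ker (φ i))
    (fun i ↦ ker (ψ i)) <| Submodule.multiset_eq_of_countP_eq (by simpa using hι)
      (by simpa using hι) fun v ↦ by rw [hzero, hzero, hφψ]
  choose g hg using fun i ↦ exists_linearEquiv_apply_eq_of_ker_eq _ _ (hσ i)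
  exact ⟨σ, g, hg⟩

theorem stmt_18_general (K L : Type*) [Field K] [Fintype K] [Field L] [Fintype L]
    [Algebra K L] [DecidableEq L]
    (m : ℕ) (hm : m ≤ Fintype.card K)
    (C : Submodule K (Fin m → L)) (f : C →ₗ[K] (Fin m → L))
    (hf : ∀ c : C, hammingNorm (f c) = hammingNorm (c : Fin m → L)) :
    ∃ (π : Equiv.Perm (Fin m)) (g : Fin m → (L ≃ₗ[K] L)),
      ∀ (c : C) (i : Fin m), f c i = g i ((c : Fin m → L) (π i)) := by
  obtain ⟨π, g, hg⟩ := LinearMap.exists_perm_linearEquiv_of_hammingNorm_eq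
    (fun i ↦ LinearMap.proj (R := K) (φ := fun _ ↦ L) i ∘ₗ C.subtype)
    (fun i ↦ LinearMap.proj (R := K) (φ := fun _ ↦ L) i ∘ₗ f)
    (by simpa using hm) fun c ↦ (hf c).symm
  exact ⟨π, g, fun c i ↦ hg i c⟩

theorem stmt_18 (K L : Type*) [Field K] [Fintype K] [Field L] [Fintype L]
    [Algebra K L] [DecidableEq L]
    (hKL : ∃ ω : L, ω ∉ Set.range (algebraMap K L))
    (m : ℕ) (hm : m ≤ Fintype.card K)
    (C : Submodule K (Fin m → L)) (f : C →ₗ[K] (Fin m → L))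
    (hf : ∀ c : C, hammingNorm (f c) = hammingNorm (c : Fin m → L)) :
    ∃ (π : Equiv.Perm (Fin m)) (g : Fin m → (L ≃ₗ[K] L)),
      ∀ (c : C) (i : Fin m), f c i = g i ((c : Fin m → L) (π i)) :=
  stmt_18_general K L m hm C f hf
end

section
/- Let q = |K| and suppose tuples of K-subspaces 𝒰 = (U_1,...,U_{q+1}) and 𝒱 = (V_1,...,V_{q+1}) of a finite-dimensional K-space satisfy ∑_i (1/|V_i|)·1_{V_i} = ∑_i (1/|U_i|)·1_{U_i}, with max_i dim V_i > max_i dim U_i. Then, letting k = max_i dim V_i, there exist subspaces S ⊂ V with dim V = k and dim S = k−2 such that, up to permutation, V_1 = ... = V_q = V, V_{q+1} = S, and U_1, ..., U_{q+1} are precisely the q+1 distinct hyperplanes of V containing S. -/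
/-!
Multiplying the identity by `q ^ k` turns it into an equality `weight k V = weight k U` of
`ℕ`-valued functions, where a point `w` gets `q ^ (k - dim T i)` from every `T i ∋ w`; all `U j`
contribute at least `q`. Since a space over `𝔽_q` is not the union of `q` proper subspaces, some
point of a `k`-dimensional `V i₀` avoids every `V i ≠ V i₀`; its weight is the number of copies of
`V i₀`, hence at least `q`. So `V` is `q` copies of `X := V i₀` and one further space `S`.

A point of `X \ S` has weight `q`, so it lies in exactly one `U j`, which is a hyperplane. A point
of `S \ X` would make `S` itself one of the `U j`, and a point of `X` avoiding the other `q`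
spaces `U i` would then have weight `q` on one side and `0` on the other; so `S ≤ X`. Every `U j`
lies in `X` or in `S`; comparing weights at `0` rules out `U j ≤ S`, and then gives `dim S = k - 2`.
Finally a point of `S` has weight `q + q ^ 2`, so it lies in all `q + 1` hyperplanes `U j`.
-/

open Finset Module

namespace Submodule

variable {K M : Type*} [Field K] [AddCommGroup M] [Module K M] [FiniteDimensional K M]

theorem eq_sup_span_singleton_of_finrank_le {S A : Submodule K M} {x : M} (hSA : S ≤ A)
    (hx : x ∈ A) (hxS : x ∉ S) (h : finrank K A ≤ finrank K S + 1) : A = S ⊔ K ∙ x :=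
  (eq_of_le_of_finrank_le (sup_le hSA ((span_singleton_le_iff_mem x A).2 hx))
    (by rwa [finrank_sup_span_singleton hxS])).symm

variable [Fintype K]

theorem exists_forall_notMem_of_card_le_card {ι : Type*} (s : Finset ι) (p : ι → Submodule K M)
    (hp : ∀ i ∈ s, p i ≠ ⊤) (hs : #s ≤ Fintype.card K) : ∃ x, ∀ i ∈ s, x ∉ p i := by
  classical
  obtain rfl | ⟨i₀, hi₀⟩ := s.eq_empty_or_nonempty
  · exact ⟨0, by simp⟩
  have : Fintype M := @Fintype.ofFinite M (Module.finite_of_finite K)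
  by_contra! hcover
  set q := Fintype.card K
  set n := finrank K M
  have hq : 2 ≤ q := Fintype.one_lt_card
  have hn : 1 ≤ n := Nat.one_le_iff_ne_zero.2 (finrank_lt (hp i₀ hi₀)).ne_bot
  have hcard (p : Submodule K M) : #{x | x ∈ p} = q ^ finrank K p := by
    rw [← Fintype.card_subtype]; exact card_eq_pow_finrank
  have hsub : univ.erase 0 ⊆ s.biUnion fun i => ({x | x ∈ p i} : Finset M).erase 0 := by
    intro x hx
    obtain ⟨i, hi, hxi⟩ := hcover x
    exact mem_biUnion.2 ⟨i, hi, mem_erase.2 ⟨ne_of_mem_erase hx, by simpa using hxi⟩⟩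
  have hpow : 1 ≤ q ^ (n - 1) := Nat.one_le_pow _ _ (by omega)
  have hqn : q ^ n = q * q ^ (n - 1) := by rw [← pow_succ']; congr 1; omega
  have : q ^ n - 1 ≤ q * (q ^ (n - 1) - 1) :=
    calc q ^ n - 1 = #(univ.erase (0 : M)) := by
          rw [card_erase_of_mem (mem_univ _), card_univ, card_eq_pow_finrank (K := K)]
      _ ≤ ∑ i ∈ s, #(({x | x ∈ p i} : Finset M).erase 0) :=
          (card_le_card hsub).trans card_biUnion_le
      _ ≤ ∑ _i ∈ s, (q ^ (n - 1) - 1) := sum_le_sum fun i hi => by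
          rw [card_erase_of_mem (by simp), hcard]
          have := finrank_lt (hp i hi)
          gcongr <;> omega
      _ ≤ q * (q ^ (n - 1) - 1) := by rw [sum_const, smul_eq_mul]; gcongr
  rw [Nat.mul_sub_one, ← hqn] at this
  have : q ≤ q ^ n := hqn ▸ Nat.le_mul_of_pos_right q hpow
  omega

theorem exists_mem_forall_notMem_of_card_le_card {ι : Type*} (X : Submodule K M) (s : Finset ι)
    (p : ι → Submodule K M) (hp : ∀ i ∈ s, ¬ X ≤ p i) (hs : #s ≤ Fintype.card K) :
    ∃ x ∈ X, ∀ i ∈ s, x ∉ p i := by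
  obtain ⟨x, hx⟩ := exists_forall_notMem_of_card_le_card s (fun i => (p i).comap X.subtype)
    (fun i hi => by rw [Ne, comap_subtype_eq_top]; exact hp i hi) hs
  exact ⟨x, x.2, hx⟩

end Submodule

theorem exists_perm_apply_eq_ite {α : Type*} {n : ℕ} (f : Fin (n + 1) → α) {t : Fin (n + 1)} {x : α}
    (h : ∀ i ≠ t, f i = x) :
    ∃ π : Equiv.Perm (Fin (n + 1)), ∀ i, f (π i) = if i = Fin.last n then f t else x := by
  refine ⟨Equiv.swap (Fin.last n) t, fun i => ?_⟩
  split_ifs with hi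
  · rw [hi, Equiv.swap_apply_left]
  · exact h _ fun h' => hi (by rwa [Equiv.swap_apply_eq_iff, Equiv.swap_apply_right] at h')

section

variable {K W ι : Type*} [Field K] [Fintype K] [AddCommGroup W] [Module K W] [Fintype ι]

local notation "q" => Fintype.card K

open scoped Classical

/-- `q ^ k * ∑ i, 1_{T i} w / |T i|`, provided every `T i` has dimension at most `k`
(otherwise the truncated subtraction makes it junk). -/
noncomputable def weight (k : ℕ) (T : ι → Submodule K W) (w : W) : ℕ :=
  ∑ i with w ∈ T i, q ^ (k - finrank K (T i))

variable {k : ℕ} {T : ι → Submodule K W} {w : W}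

theorem sum_inv_card_mul_indicator_eq [FiniteDimensional K W] (hT : ∀ i, finrank K (T i) ≤ k) :
    ∑ i, (Nat.card (T i) : ℝ)⁻¹ * Set.indicator (T i : Set W) 1 w =
      weight k T w / (q : ℝ) ^ k := by
  rw [weight, Nat.cast_sum, sum_div, sum_filter]
  refine sum_congr rfl fun i _ => ?_
  have hq : (q : ℝ) ≠ 0 := by exact_mod_cast Fintype.card_ne_zero
  by_cases h : w ∈ T i
  · rw [Set.indicator_of_mem (by exact h), if_pos h, Pi.one_apply, mul_one,
      natCard_eq_pow_finrank (K := K), Nat.card_eq_fintype_card]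
    field_simp
    push_cast
    rw [← pow_add, Nat.add_sub_cancel' (hT i)]
  · rw [Set.indicator_of_notMem (by exact h), if_neg h, mul_zero]

theorem pow_le_weight {j : ι} (h : w ∈ T j) : q ^ (k - finrank K (T j)) ≤ weight k T w :=
  single_le_sum (f := fun i => q ^ (k - finrank K (T i))) (fun _ _ => Nat.zero_le _)
    (mem_filter.2 ⟨mem_univ j, h⟩)

theorem weight_zero : weight k T 0 = ∑ i, q ^ (k - finrank K (T i)) := by
  simp [weight]

theorem exists_mem_of_weight_ne_zero (h : weight k T w ≠ 0) : ∃ i, w ∈ T i := by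
  obtain ⟨i, hi, -⟩ := exists_ne_zero_of_sum_ne_zero h
  exact ⟨i, (mem_filter.1 hi).2⟩

theorem weight_eq_card_mul_pow {m : ℕ} (hT : ∀ i, w ∈ T i → finrank K (T i) + m = k) :
    weight k T w = #{i | w ∈ T i} * q ^ m := by
  rw [weight, ← smul_eq_mul, ← sum_const]
  refine sum_congr rfl fun i hi => ?_
  have := hT i (mem_filter.1 hi).2
  congr 1
  omega

theorem weight_eq_of_forall_ne_eq {X : Submodule K W} {t : ι} (ht : ∀ i ≠ t, T i = X) :
    weight k T w = (if w ∈ X then (Fintype.card ι - 1) * q ^ (k - finrank K X) else 0) +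
      if w ∈ T t then q ^ (k - finrank K (T t)) else 0 := by
  rw [weight, sum_filter, Fintype.sum_eq_add_sum_compl t, add_comm]
  congr 1
  rw [sum_congr rfl fun i hi => by rw [ht i (by simpa using hi)], sum_const, card_compl,
    card_singleton, smul_ite, smul_eq_mul, smul_zero]

theorem exists_unique_mem_of_weight_eq_pow {m : ℕ} (hT : ∀ i, w ∈ T i → finrank K (T i) + m ≤ k)
    (h : weight k T w = q ^ m) :
    ∃ j, w ∈ T j ∧ finrank K (T j) + m = k ∧ ∀ i, w ∈ T i → i = j := by
  have hq : 2 ≤ q := Fintype.one_lt_card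
  have hle {i} (hi : w ∈ T i) : q ^ m ≤ q ^ (k - finrank K (T i)) := by
    have := hT i hi
    exact Nat.pow_le_pow_right (by omega) (by omega)
  obtain ⟨j, hj⟩ := exists_mem_of_weight_ne_zero (h ▸ pow_ne_zero m (by omega))
  have huniq (i) (hi : w ∈ T i) : i = j := by
    by_contra hij
    have hpair : q ^ (k - finrank K (T i)) + q ^ (k - finrank K (T j)) ≤ weight k T w := by
      rw [← sum_pair (f := fun i => q ^ (k - finrank K (T i))) hij]
      exact sum_le_sum_of_subset (by simp [insert_subset_iff, hi, hj])
    have := hle hi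
    have := hle hj
    have : 0 < q ^ m := by positivity
    omega
  have hsingle : weight k T w = q ^ (k - finrank K (T j)) :=
    sum_eq_single_of_mem j (mem_filter.2 ⟨mem_univ j, hj⟩) fun i hi hij =>
      absurd (huniq i (mem_filter.1 hi).2) hij
  have := Nat.pow_right_injective hq (hsingle.symm.trans h)
  have := hT j hj
  exact ⟨j, hj, by omega, huniq⟩

variable {U V : ι → Submodule K W} {X S : Submodule K W}

theorem exists_forall_ne_eq_of_weight_eq [FiniteDimensional K W] (hι : Fintype.card ι ≤ q + 1)
    (hU : ∀ j, finrank K (U j) < k) (hV : ∀ i, finrank K (V i) ≤ k) {i₀ : ι}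
    (hi₀ : finrank K (V i₀) = k) (hweight : ∀ w, weight k V w = weight k U w) :
    ∃ t, ∀ i ≠ t, V i = V i₀ := by
  have hq : 2 ≤ q := Fintype.one_lt_card
  have : Nonempty ι := ⟨i₀⟩
  set A : Finset ι := {i | V i = V i₀}
  have hmemA {i} : i ∈ A ↔ V i = V i₀ := by simp [A]
  have hweightV (w) (hw : w ∈ V i₀) (hout : ∀ i ∉ A, w ∉ V i) : weight k V w = #A := by
    have hfilter : ({i | w ∈ V i} : Finset ι) = A := by
      ext i
      simp only [mem_filter, mem_univ, true_and]
      exact ⟨fun h => by_contra fun hi => hout i hi h, fun h => (hmemA.1 h) ▸ hw⟩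
    rw [weight_eq_card_mul_pow (m := 0) fun i hi => ?_, hfilter, pow_zero, mul_one]
    rw [hmemA.1 (by_contra fun h => hout i h hi), hi₀, add_zero]
  have hAq : q ≤ #A := by
    have hi₀A : i₀ ∈ A := hmemA.2 rfl
    obtain ⟨w, hw, hout⟩ := (V i₀).exists_mem_forall_notMem_of_card_le_card Aᶜ V
      (fun i hi hle => mem_compl.1 hi <|
        hmemA.2 (Submodule.eq_of_le_of_finrank_le hle (hi₀ ▸ hV i)).symm)
      (by rw [card_compl]; have := card_pos.2 ⟨i₀, hi₀A⟩; omega)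
    have hwV := hweightV w hw fun i hi => hout i (mem_compl.2 hi)
    obtain ⟨j, hj⟩ := exists_mem_of_weight_ne_zero (hweight w ▸ hwV ▸ (card_pos.2 ⟨i₀, hi₀A⟩).ne')
    calc q = q ^ 1 := (pow_one q).symm
      _ ≤ q ^ (k - finrank K (U j)) := Nat.pow_le_pow_right (by omega) (by have := hU j; omega)
      _ ≤ #A := hwV ▸ hweight w ▸ pow_le_weight hj
  obtain ⟨t, ht⟩ := card_le_one_iff_subset_singleton.1 (show #Aᶜ ≤ 1 by rw [card_compl]; omega)
  exact ⟨t, fun i hi => hmemA.1 (by_contra fun h => hi (mem_singleton.1 (ht (mem_compl.2 h))))⟩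

theorem exists_unique_mem_of_mem_of_notMem (hU : ∀ j, finrank K (U j) < k)
    (hw : ∀ w, weight k U w =
      (if w ∈ X then q else 0) + if w ∈ S then q ^ (k - finrank K S) else 0)
    {x : W} (hxX : x ∈ X) (hxS : x ∉ S) :
    ∃ j, x ∈ U j ∧ finrank K (U j) + 1 = k ∧ ∀ i, x ∈ U i → i = j :=
  exists_unique_mem_of_weight_eq_pow (fun i _ => hU i)
    (by rw [hw, if_pos hxX, if_neg hxS, add_zero, pow_one])

theorem le_or_le_of_weight_eq
    (hw : ∀ w, weight k U w =
      (if w ∈ X then q else 0) + if w ∈ S then q ^ (k - finrank K S) else 0)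
    (j : ι) : U j ≤ X ∨ U j ≤ S := by
  refine AddSubgroupClass.subset_union.1 fun x hx => ?_
  have := (pow_pos Fintype.card_pos _).trans_le (pow_le_weight (k := k) hx)
  by_contra h
  simp only [Set.mem_union, SetLike.mem_coe, not_or] at h
  rw [hw, if_neg h.1, if_neg h.2] at this
  exact lt_irrefl 0 this

theorem le_of_weight_eq [FiniteDimensional K W] (hι : Fintype.card ι ≤ q + 1)
    (hU : ∀ j, finrank K (U j) < k) (hX : finrank K X = k)
    (hw : ∀ w, weight k U w =
      (if w ∈ X then q else 0) + if w ∈ S then q ^ (k - finrank K S) else 0) :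
    S ≤ X := by
  intro s hs
  by_contra hsX
  have hle (i) (hi : s ∈ U i) : U i ≤ S :=
    (le_or_le_of_weight_eq hw i).resolve_left fun h => hsX (h hi)
  obtain ⟨j₀, hj₀, hdim, -⟩ := exists_unique_mem_of_weight_eq_pow (k := k) (m := k - finrank K S)
    (fun i hi => by have := Submodule.finrank_mono (hle i hi); have := hU i; omega)
    (by rw [hw, if_neg hsX, if_pos hs, zero_add])
  have hj₀S : U j₀ = S := Submodule.eq_of_le_of_finrank_eq (hle j₀ hj₀) (by have := hU j₀; omega)
  obtain ⟨x, hx, hout⟩ := X.exists_mem_forall_notMem_of_card_le_card (univ.erase j₀) U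
    (fun j _ h => (hU j).not_ge (hX ▸ Submodule.finrank_mono h))
    (by rw [card_erase_of_mem (mem_univ _), card_univ]; omega)
  have hweight : weight k U x = if x ∈ S then q ^ (k - finrank K S) else 0 := by
    rw [weight, sum_filter, sum_eq_single j₀
      (fun j _ hj => if_neg (hout j (mem_erase.2 ⟨hj, mem_univ _⟩))) (by simp), hj₀S]
  rw [hw, if_pos hx] at hweight
  have := Fintype.card_pos (α := K)
  split_ifs at hweight <;> omega

theorem finrank_add_one_eq_of_weight_eq [FiniteDimensional K W] (hι : Fintype.card ι = q + 1)
    (hU : ∀ j, finrank K (U j) < k)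
    (hw : ∀ w, weight k U w =
      (if w ∈ X then q else 0) + if w ∈ S then q ^ (k - finrank K S) else 0)
    (j : ι) : finrank K (U j) + 1 = k := by
  have hq : 2 ≤ q := Fintype.one_lt_card
  by_contra hj
  have hjS : U j ≤ S := by
    by_contra h
    obtain ⟨x, hx, hxS⟩ := SetLike.not_le_iff_exists.1 h
    have hxX := (le_or_le_of_weight_eq hw j).resolve_right h hx
    obtain ⟨j', -, hdim, huniq⟩ := exists_unique_mem_of_mem_of_notMem hU hw hxX hxS
    exact hj (huniq j hx ▸ hdim)
  have h0 := hw 0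
  rw [weight_zero, ← add_sum_erase _ _ (mem_univ j), if_pos X.zero_mem, if_pos S.zero_mem] at h0
  have hterm : q ^ (k - finrank K S) ≤ q ^ (k - finrank K (U j)) :=
    Nat.pow_le_pow_right (by omega) (by have := Submodule.finrank_mono hjS; omega)
  have hrest : q * q ≤ ∑ i ∈ univ.erase j, q ^ (k - finrank K (U i)) := by
    have := card_nsmul_le_sum (univ.erase j) (fun i => q ^ (k - finrank K (U i))) q
      fun i _ => Nat.le_self_pow (by have := hU i; omega) q
    rwa [card_erase_of_mem (mem_univ _), card_univ, hι, Nat.add_sub_cancel, smul_eq_mul] at this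
  nlinarith

theorem finrank_add_two_eq_of_weight_eq (hι : Fintype.card ι = q + 1) (hS : finrank K S ≤ k)
    (hUdim : ∀ j, finrank K (U j) + 1 = k)
    (hw : ∀ w, weight k U w =
      (if w ∈ X then q else 0) + if w ∈ S then q ^ (k - finrank K S) else 0) :
    finrank K S + 2 = k := by
  have hq : 2 ≤ q := Fintype.one_lt_card
  have h0 := hw 0
  rw [weight_eq_card_mul_pow (m := 1) fun i _ => hUdim i, if_pos X.zero_mem, if_pos S.zero_mem]
    at h0
  rw [filter_true_of_mem fun i _ => (U i).zero_mem, card_univ, hι, pow_one] at h0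
  have : q ^ (k - finrank K S) = q ^ 2 := by nlinarith
  have := Nat.pow_right_injective hq this
  omega

theorem le_apply_of_weight_eq (hι : Fintype.card ι = q + 1) (hSX : S ≤ X)
    (hUdim : ∀ j, finrank K (U j) + 1 = k) (hd : finrank K S + 2 = k)
    (hw : ∀ w, weight k U w =
      (if w ∈ X then q else 0) + if w ∈ S then q ^ (k - finrank K S) else 0)
    (j : ι) : S ≤ U j := by
  intro x hx
  have h := hw x
  rw [weight_eq_card_mul_pow (m := 1) fun i _ => hUdim i, if_pos (hSX hx), if_pos hx,
    show k - finrank K S = 2 by omega, pow_one] at h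
  have hcard : #{i | x ∈ U i} = #(univ : Finset ι) := by
    rw [card_univ, hι]
    exact Nat.eq_of_mul_eq_mul_right (Fintype.card_pos (α := K)) (by rw [h]; ring)
  exact filter_eq_self.1 (eq_univ_of_card _ hcard) j (mem_univ j)

theorem injective_of_weight_eq [FiniteDimensional K W] (hUX : ∀ j, U j ≤ X)
    (hUdim : ∀ j, finrank K (U j) + 1 = k) (hd : finrank K S + 2 = k)
    (hw : ∀ w, weight k U w =
      (if w ∈ X then q else 0) + if w ∈ S then q ^ (k - finrank K S) else 0) :
    Function.Injective U := by
  have hU (j) : finrank K (U j) < k := by have := hUdim j; omega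
  intro a b hab
  obtain ⟨x, hx, hxS⟩ := SetLike.not_le_iff_exists.1 fun h : U a ≤ S => by
    have := Submodule.finrank_mono h
    have := hUdim a
    omega
  obtain ⟨j, -, -, huniq⟩ :=
    exists_unique_mem_of_mem_of_notMem hU hw (hUX a hx) hxS
  exact (huniq a hx).trans (huniq b (hab ▸ hx)).symm

theorem mem_range_of_weight_eq [FiniteDimensional K W] (hSU : ∀ j, S ≤ U j)
    (hUdim : ∀ j, finrank K (U j) + 1 = k) (hd : finrank K S + 2 = k)
    (hw : ∀ w, weight k U w =
      (if w ∈ X then q else 0) + if w ∈ S then q ^ (k - finrank K S) else 0)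
    {H : Submodule K W} (hSH : S ≤ H) (hHX : H ≤ X) (hH : finrank K H = k - 1) :
    H ∈ Set.range U := by
  have hU (j) : finrank K (U j) < k := by have := hUdim j; omega
  obtain ⟨x, hx, hxS⟩ := SetLike.not_le_iff_exists.1 fun h : H ≤ S => by
    have := Submodule.finrank_mono h
    omega
  obtain ⟨j, hj, -, -⟩ :=
    exists_unique_mem_of_mem_of_notMem hU hw (hHX hx) hxS
  refine ⟨j, (Submodule.eq_sup_span_singleton_of_finrank_le (hSU j) hj hxS ?_).trans
    (Submodule.eq_sup_span_singleton_of_finrank_le hSH hx hxS ?_).symm⟩ <;>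
  · have := hUdim j
    omega

end

theorem stmt_19 (K W : Type*) [Field K] [Fintype K]
    [AddCommGroup W] [Module K W] [FiniteDimensional K W]
    (U V : Fin (Fintype.card K + 1) → Submodule K W)
    (heq : ∀ w : W,
      ∑ i, (Nat.card (V i) : ℝ)⁻¹ * Set.indicator (V i : Set W) 1 w =
      ∑ i, (Nat.card (U i) : ℝ)⁻¹ * Set.indicator (U i : Set W) 1 w)
    (hmax : (Finset.univ.sup fun i => Module.finrank K (V i)) >
            (Finset.univ.sup fun i => Module.finrank K (U i)))
    (k : ℕ) (hk : k = Finset.univ.sup fun i => Module.finrank K (V i)) :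
    ∃ (Vsp S : Submodule K W), S ≤ Vsp ∧
      Module.finrank K Vsp = k ∧ Module.finrank K S = k - 2 ∧
      (∃ π : Equiv.Perm (Fin (Fintype.card K + 1)),
        ∀ i, V (π i) = if i = Fin.last (Fintype.card K) then S else Vsp) ∧
      Function.Injective U ∧
      (∀ W' : Submodule K W, W' ∈ Set.range U ↔
        S ≤ W' ∧ W' ≤ Vsp ∧ Module.finrank K W' = k - 1) := by
  classical
  have hι := Fintype.card_fin (Fintype.card K + 1)
  have hV (i) : finrank K (V i) ≤ k := hk ▸ le_sup (f := fun i => finrank K (V i)) (mem_univ i)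
  have hU (j) : finrank K (U j) < k :=
    hk ▸ (le_sup (f := fun j => finrank K (U j)) (mem_univ j)).trans_lt hmax
  have hweight (w) : weight k V w = weight k U w := by
    have := heq w
    rw [sum_inv_card_mul_indicator_eq hV, sum_inv_card_mul_indicator_eq fun j => (hU j).le] at this
    exact_mod_cast (div_left_inj' (by positivity)).1 this
  obtain ⟨i₀, -, hi₀⟩ := exists_mem_eq_sup univ univ_nonempty fun i => finrank K (V i)
  replace hi₀ : finrank K (V i₀) = k := (hk.trans hi₀).symm
  obtain ⟨t, hVt⟩ := exists_forall_ne_eq_of_weight_eq hι.le hU hV hi₀ hweight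
  have hw (w) : weight k U w = (if w ∈ V i₀ then Fintype.card K else 0) +
      if w ∈ V t then Fintype.card K ^ (k - finrank K (V t)) else 0 := by
    rw [← hweight, weight_eq_of_forall_ne_eq hVt, hι, hi₀]
    simp
  have hSX := le_of_weight_eq hι.le hU hi₀ hw
  have hUdim := finrank_add_one_eq_of_weight_eq hι hU hw
  have hd := finrank_add_two_eq_of_weight_eq hι (hV t) hUdim hw
  have hSU := le_apply_of_weight_eq hι hSX hUdim hd hw
  have hUX (j) : U j ≤ V i₀ := (le_or_le_of_weight_eq hw j).elim id fun h => h.trans hSX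
  refine ⟨V i₀, V t, hSX, hi₀, by omega, exists_perm_apply_eq_ite V hVt,
    injective_of_weight_eq hUX hUdim hd hw, fun H => ⟨?_, fun ⟨hSH, hHX, hH⟩ =>
      mem_range_of_weight_eq hSU hUdim hd hw hSH hHX hH⟩⟩
  rintro ⟨j, rfl⟩
  exact ⟨hSU j, hUX j, by have := hUdim j; omega⟩
end
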